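/- arXiv:1006.0446 — 5 statements merged into one kernel-verified Lean document; each statement's English description precedes it below -/
import Mathlib

section
/- There exists a graph G of genus 2 on which the group ℤ/3ℤ × ℤ/2ℤ of order 6 = 6(2 − 1) acts harmonically; namely, the graph obtained by joining two copies of the rooted tree with three edges emanating from the root via three edges between the two roots. -/
open scoped Classical

/-- A finite connected multigraph without loop edges. -/
structure Multigraph where
  V : Type
  E : Type
  [fintypeV : Fintype V]
  [fintypeE : Fintype E]
  ends : E → Sym2 V
  loopless : ∀ e : E, ¬ (ends e).IsDiag
  connected : (SimpleGraph.fromRel fun x y : V => ∃ e : E, ends e = s(x, y)).Connected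

attribute [instance] Multigraph.fintypeV Multigraph.fintypeE

namespace Multigraph

/-- The genus (first Betti number, cyclomatic number) of a multigraph. -/
def genus (G : Multigraph) : ℤ :=
  (Fintype.card G.E : ℤ) - (Fintype.card G.V : ℤ) + 1

/-- A cycle in a multigraph, given as a nonempty set of edges such that every vertex is
incident to either 0 or 2 of its edges. -/
def IsCycleSet (G : Multigraph) (C : Set G.E) : Prop :=
  C.Nonempty ∧ ∀ x : G.V,
    Nat.card {e : G.E // e ∈ C ∧ x ∈ G.ends e} = 0 ∨
    Nat.card {e : G.E // e ∈ C ∧ x ∈ G.ends e} = 2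

end Multigraph

/-- A morphism of multigraphs: vertices go to vertices, and each edge goes either to an
edge joining the images of its endpoints, or to the common image of its endpoints
(in which case the edge is *vertical*). -/
structure Morphism (G G' : Multigraph) where
  vmap : G.V → G'.V
  emap : G.E → G'.E ⊕ G'.V
  compat : ∀ e : G.E,
    (∀ e', emap e = Sum.inl e' → G'.ends e' = (G.ends e).map vmap) ∧
    (∀ v, emap e = Sum.inr v → (G.ends e).map vmap = Sym2.diag v)

namespace Morphism

/-- A morphism is harmonic if for every vertex `x`, the number of edges incident to `x`
mapping to a given edge `e'` incident to `φ(x)` is independent of the choice of `e'`. -/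
def Harmonic {G G' : Multigraph} (φ : Morphism G G') : Prop :=
  ∀ (x : G.V) (e₁ e₂ : G'.E), φ.vmap x ∈ G'.ends e₁ → φ.vmap x ∈ G'.ends e₂ →
    Nat.card {e : G.E // x ∈ G.ends e ∧ φ.emap e = Sum.inl e₁} =
    Nat.card {e : G.E // x ∈ G.ends e ∧ φ.emap e = Sum.inl e₂}

/-- A morphism is nonconstant if its image is not a single vertex. -/
def Nonconstant {G G' : Multigraph} (φ : Morphism G G') : Prop :=
  ∃ x y : G.V, φ.vmap x ≠ φ.vmap y

/-- Composition of morphisms of multigraphs. -/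
def comp {G₁ G₂ G₃ : Multigraph} (ψ : Morphism G₂ G₃) (φ : Morphism G₁ G₂) :
    Morphism G₁ G₃ where
  vmap := ψ.vmap ∘ φ.vmap
  emap e := Sum.elim ψ.emap (fun v => Sum.inr (ψ.vmap v)) (φ.emap e)
  compat e := by
    constructor
    · intro e'' h
      rcases hφ : φ.emap e with e' | v
      · simp only [hφ, Sum.elim_inl] at h
        have h1 := (φ.compat e).1 e' hφ
        have h2 := (ψ.compat e').1 e'' h
        rw [h2, h1, Sym2.map_map]
      · simp only [hφ, Sum.elim_inr] at h
        simp at h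
    · intro v h
      rcases hφ : φ.emap e with e' | v₀
      · simp only [hφ, Sum.elim_inl] at h
        have h1 := (φ.compat e).1 e' hφ
        have h2 := (ψ.compat e').2 v h
        rw [← Sym2.map_map, ← h1]
        exact h2
      · simp only [hφ, Sum.elim_inr, Sum.inr.injEq] at h
        have h1 := (φ.compat e).2 v₀ hφ
        subst h
        rw [← Sym2.map_map, h1]
        rfl
end Morphism

/-- A group of automorphisms of a multigraph `G` (a faithful action of `Γ` on `G` by
automorphisms, i.e. a subgroup of `Aut(G)`). -/
structure GraphAction (Γ : Type) [Group Γ] (G : Multigraph) where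
  actV : Γ →* Equiv.Perm G.V
  actE : Γ →* Equiv.Perm G.E
  ends_map : ∀ (γ : Γ) (e : G.E), G.ends (actE γ e) = (G.ends e).map (actV γ)
  faithful : ∀ γ : Γ, (∀ x : G.V, actV γ x = x) → (∀ e : G.E, actE γ e = e) → γ = 1

namespace GraphAction

variable {Γ : Type} [Group Γ] {G : Multigraph}

/-- Two vertices lie in the same `Δ`-orbit. -/
def vrel (A : GraphAction Γ G) (Δ : Subgroup Γ) (x y : G.V) : Prop :=
  ∃ δ ∈ Δ, A.actV δ x = y

/-- Two edges lie in the same `Δ`-orbit. -/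
def erel (A : GraphAction Γ G) (Δ : Subgroup Γ) (e f : G.E) : Prop :=
  ∃ δ ∈ Δ, A.actE δ e = f

/-- The setoid of `Δ`-orbits of vertices. -/
def vSetoid (A : GraphAction Γ G) (Δ : Subgroup Γ) : Setoid G.V where
  r := A.vrel Δ
  iseqv := by
    constructor
    · intro x; exact ⟨1, Δ.one_mem, by simp⟩
    · rintro x y ⟨δ, hδ, h⟩
      refine ⟨δ⁻¹, Δ.inv_mem hδ, ?_⟩
      rw [map_inv, ← h]
      exact Equiv.symm_apply_apply _ _
    · rintro x y z ⟨δ₁, h1, e1⟩ ⟨δ₂, h2, e2⟩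
      refine ⟨δ₂ * δ₁, Δ.mul_mem h2 h1, ?_⟩
      rw [map_mul]
      simp [Equiv.Perm.mul_apply, e1, e2]

/-- The setoid of `Δ`-orbits of edges. -/
def eSetoid (A : GraphAction Γ G) (Δ : Subgroup Γ) : Setoid G.E where
  r := A.erel Δ
  iseqv := by
    constructor
    · intro e; exact ⟨1, Δ.one_mem, by simp⟩
    · rintro e f ⟨δ, hδ, h⟩
      refine ⟨δ⁻¹, Δ.inv_mem hδ, ?_⟩
      rw [map_inv, ← h]
      exact Equiv.symm_apply_apply _ _
    · rintro e f k ⟨δ₁, h1, e1⟩ ⟨δ₂, h2, e2⟩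
      refine ⟨δ₂ * δ₁, Δ.mul_mem h2 h1, ?_⟩
      rw [map_mul]
      simp [Equiv.Perm.mul_apply, e1, e2]

/-- An edge is `Δ`-vertical if its two endpoints lie in the same `Δ`-orbit (so it is
contracted by the quotient morphism `G → G/Δ`). -/
def Vertical (A : GraphAction Γ G) (Δ : Subgroup Γ) (e : G.E) : Prop :=
  ∃ x y : G.V, G.ends e = s(x, y) ∧ A.vrel Δ x y

/-- The vertex set of the quotient graph `G/Δ`: the `Δ`-orbits of vertices. -/
abbrev quotV (A : GraphAction Γ G) (Δ : Subgroup Γ) : Type :=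
  Quotient (A.vSetoid Δ)

/-- The edge set of the quotient graph `G/Δ`: the `Δ`-orbits of non-vertical edges. -/
abbrev quotE (A : GraphAction Γ G) (Δ : Subgroup Γ) : Type :=
  Quotient ((A.eSetoid Δ).comap (Subtype.val : {e : G.E // ¬ A.Vertical Δ e} → G.E))

/-- The genus of the quotient graph `G/Δ`. -/
noncomputable def quotGenus (A : GraphAction Γ G) (Δ : Subgroup Γ) : ℤ :=
  (Nat.card (A.quotE Δ) : ℤ) - (Nat.card (A.quotV Δ) : ℤ) + 1

/-- The order of the stabilizer `Δ_x` of a vertex `x`. -/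
noncomputable def stabOrder (A : GraphAction Γ G) (Δ : Subgroup Γ) (x : G.V) : ℕ :=
  Nat.card {γ : Γ // γ ∈ Δ ∧ A.actV γ x = x}

/-- The vertical multiplicity of a vertex `x`: the number of `Δ`-vertical edges
incident to `x`. -/
noncomputable def vertMult (A : GraphAction Γ G) (Δ : Subgroup Γ) (x : G.V) : ℕ :=
  Nat.card {e : G.E // x ∈ G.ends e ∧ A.Vertical Δ e}

/-- `r_y = |Δ_x|` for a vertex `y` of the quotient `G/Δ` and any `x` in the fiber over `y`. -/
noncomputable def r (A : GraphAction Γ G) (Δ : Subgroup Γ) (y : A.quotV Δ) : ℕ :=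
  A.stabOrder Δ (Quotient.out y)

/-- `w_y = v(x)/|Δ_x|` for a vertex `y` of the quotient `G/Δ` and any `x` in the fiber. -/
noncomputable def w (A : GraphAction Γ G) (Δ : Subgroup Γ) (y : A.quotV Δ) : ℕ :=
  A.vertMult Δ (Quotient.out y) / A.r Δ y

/-- The ramification number `R = Σ_y [2(1 - 1/r_y) + w_y]` of the quotient map `G → G/Δ`. -/
noncomputable def ram (A : GraphAction Γ G) (Δ : Subgroup Γ) : ℚ :=
  ∑ᶠ y : A.quotV Δ, (2 * (1 - 1 / (A.r Δ y : ℚ)) + (A.w Δ y : ℚ))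

/-- A vertex `y` of the quotient `G/Δ` is a branch point if `2(1 - 1/r_y) + w_y > 0`. -/
def IsBranch (A : GraphAction Γ G) (Δ : Subgroup Γ) (y : A.quotV Δ) : Prop :=
  0 < 2 * (1 - 1 / (A.r Δ y : ℚ)) + (A.w Δ y : ℚ)

/-- The quotient morphism `φ_Δ : G → G/Δ` is harmonic: for every vertex `x` of `G` and
every pair of quotient edges incident to the image of `x`, the numbers of preimages
incident to `x` agree. -/
def QuotHarmonic (A : GraphAction Γ G) (Δ : Subgroup Γ) : Prop :=
  ∀ (x : G.V) (e₁ e₂ : G.E), ¬ A.Vertical Δ e₁ → ¬ A.Vertical Δ e₂ →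
    (∃ v ∈ G.ends e₁, A.vrel Δ x v) → (∃ v ∈ G.ends e₂, A.vrel Δ x v) →
    Nat.card {e : G.E // x ∈ G.ends e ∧ A.erel Δ e e₁} =
    Nat.card {e : G.E // x ∈ G.ends e ∧ A.erel Δ e e₂}

/-- The quotient morphism `φ_Δ : G → G/Δ` is non-degenerate: no neighborhood `x(1)` is
contracted to a vertex, i.e. every vertex has a neighbor outside its `Δ`-orbit. -/
def QuotNondeg (A : GraphAction Γ G) (Δ : Subgroup Γ) : Prop :=
  ∀ x : G.V, ∃ e : G.E, x ∈ G.ends e ∧ ∃ y ∈ G.ends e, ¬ A.vrel Δ x y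

/-- `Γ` acts harmonically on `G` if for every subgroup `Δ ≤ Γ` the quotient morphism
`φ_Δ : G → G/Δ` is harmonic and non-degenerate. -/
def ActsHarmonically (A : GraphAction Γ G) : Prop :=
  ∀ Δ : Subgroup Γ, A.QuotHarmonic Δ ∧ A.QuotNondeg Δ

/-- The quotient map `G → G/Δ` is horizontally unramified: all vertex stabilizers in `Δ`
are trivial. -/
def HorizUnramified (A : GraphAction Γ G) (Δ : Subgroup Γ) : Prop :=
  ∀ (x : G.V) (γ : Γ), γ ∈ Δ → A.actV γ x = x → γ = 1

end GraphAction

/-- `M g` is the maximal order of a group acting harmonically on a graph of genus `g`. -/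
noncomputable def M (g : ℕ) : ℕ :=
  sSup {n : ℕ | ∃ (Γ : Type) (i : Group Γ) (G : Multigraph) (A : @GraphAction Γ i G),
    @GraphAction.ActsHarmonically Γ i G A ∧ G.genus = (g : ℤ) ∧ Nat.card Γ = n}


section Construction

abbrev Γ6 := Multiplicative (ZMod 3) × Multiplicative (ZMod 2)
abbrev Vt := ZMod 2 ⊕ (ZMod 2 × ZMod 3)
abbrev Et := ZMod 3 ⊕ (ZMod 2 × ZMod 3)

def ends6 : Et → Sym2 Vt
  | .inl _ => s(.inl 0, .inl 1)
  | .inr p => s(.inl p.1, .inr p)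

lemma zmod2_cases : ∀ t : ZMod 2, t = 0 ∨ t = 1 := by decide

lemma conn6 : (SimpleGraph.fromRel fun x y : Vt => ∃ e : Et, ends6 e = s(x, y)).Connected := by
  rw [SimpleGraph.connected_iff]
  refine ⟨?_, ⟨Sum.inl 0⟩⟩
  have hadj : (SimpleGraph.fromRel fun x y : Vt => ∃ e : Et, ends6 e = s(x, y)).Adj
      (Sum.inl 1) (Sum.inl 0) := ⟨by decide, by decide⟩
  have reach : ∀ v : Vt,
      (SimpleGraph.fromRel fun x y : Vt => ∃ e : Et, ends6 e = s(x, y)).Reachable v (Sum.inl 0) := by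
    intro v
    match v with
    | .inl s =>
      rcases zmod2_cases s with rfl | rfl
      · rfl
      · exact hadj.reachable
    | .inr p =>
      have h1 : (SimpleGraph.fromRel fun x y : Vt => ∃ e : Et, ends6 e = s(x, y)).Adj
          (Sum.inr p) (Sum.inl p.1) := ⟨by simp, Or.inr ⟨Sum.inr p, rfl⟩⟩
      refine h1.reachable.trans ?_
      rcases zmod2_cases p.1 with h | h <;> rw [h] <;>
        first
        | rfl
        | exact hadj.reachable
  exact fun u v => (reach u).trans (reach v).symm

abbrev Gr6 : Multigraph where
  V := Vt
  E := Et
  ends := ends6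
  loopless := by decide
  connected := conn6

def av (γ : Γ6) : Vt → Vt
  | .inl s => .inl (s + γ.2.toAdd)
  | .inr p => .inr (p.1 + γ.2.toAdd, p.2 + γ.1.toAdd)

def ae (γ : Γ6) : Et → Et
  | .inl i => .inl (i + γ.1.toAdd)
  | .inr p => .inr (p.1 + γ.2.toAdd, p.2 + γ.1.toAdd)

lemma avLI : ∀ (γ : Γ6) (v : Vt), av γ⁻¹ (av γ v) = v := by decide
lemma avRI : ∀ (γ : Γ6) (v : Vt), av γ (av γ⁻¹ v) = v := by decide
lemma aeLI : ∀ (γ : Γ6) (e : Et), ae γ⁻¹ (ae γ e) = e := by decide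
lemma aeRI : ∀ (γ : Γ6) (e : Et), ae γ (ae γ⁻¹ e) = e := by decide
lemma avOne : ∀ v, av 1 v = v := by decide
lemma avMul : ∀ a b v, av (a * b) v = av a (av b v) := by decide
lemma aeOne : ∀ e, ae 1 e = e := by decide
lemma aeMul : ∀ a b e, ae (a * b) e = ae a (ae b e) := by decide

def avP (γ : Γ6) : Equiv.Perm Vt := ⟨av γ, av γ⁻¹, avLI γ, avRI γ⟩
def aeP (γ : Γ6) : Equiv.Perm Et := ⟨ae γ, ae γ⁻¹, aeLI γ, aeRI γ⟩

def actV6 : Γ6 →* Equiv.Perm Vt where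
  toFun := avP
  map_one' := Equiv.ext avOne
  map_mul' := fun a b => Equiv.ext (avMul a b)

def actE6 : Γ6 →* Equiv.Perm Et where
  toFun := aeP
  map_one' := Equiv.ext aeOne
  map_mul' := fun a b => Equiv.ext (aeMul a b)

lemma ends_map6 : ∀ (γ : Γ6) (e : Et), ends6 (ae γ e) = (ends6 e).map (av γ) := by decide

lemma faithful6 : ∀ γ : Γ6, (∀ x : Vt, av γ x = x) → (∀ e : Et, ae γ e = e) → γ = 1 := by decide

abbrev A6 : GraphAction Γ6 Gr6 where
  actV := actV6
  actE := actE6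
  ends_map := ends_map6
  faithful := faithful6

/- Decidability instances -/
instance instDecVrel (Δ : Subgroup Γ6) [DecidablePred (· ∈ Δ)] (x y : Gr6.V) :
    Decidable (A6.vrel Δ x y) :=
  decidable_of_iff (∃ δ : Γ6, δ ∈ Δ ∧ actV6 δ x = y) Iff.rfl

instance instDecErel (Δ : Subgroup Γ6) [DecidablePred (· ∈ Δ)] (e f : Gr6.E) :
    Decidable (A6.erel Δ e f) :=
  decidable_of_iff (∃ δ : Γ6, δ ∈ Δ ∧ actE6 δ e = f) Iff.rfl

instance instDecVert (Δ : Subgroup Γ6) [DecidablePred (· ∈ Δ)] (e : Gr6.E) :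
    Decidable (A6.Vertical Δ e) :=
  decidable_of_iff (∃ x y : Gr6.V, Gr6.ends e = s(x, y) ∧ A6.vrel Δ x y) Iff.rfl

/- The four subgroups of Γ6 -/
def S3sub : Subgroup Γ6 where
  carrier := {g | g.2 = 1}
  one_mem' := rfl
  mul_mem' := by
    intro a b ha hb
    simp only [Set.mem_setOf_eq, Prod.snd_mul] at *
    rw [ha, hb, mul_one]
  inv_mem' := by
    intro a ha
    simp only [Set.mem_setOf_eq, Prod.snd_inv] at *
    rw [ha, inv_one]

def S2sub : Subgroup Γ6 where
  carrier := {g | g.1 = 1}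
  one_mem' := rfl
  mul_mem' := by
    intro a b ha hb
    simp only [Set.mem_setOf_eq, Prod.fst_mul] at *
    rw [ha, hb, mul_one]
  inv_mem' := by
    intro a ha
    simp only [Set.mem_setOf_eq, Prod.fst_inv] at *
    rw [ha, inv_one]

instance : DecidablePred (· ∈ S3sub) := fun g => decidable_of_iff (g.2 = 1) Iff.rfl
instance : DecidablePred (· ∈ S2sub) := fun g => decidable_of_iff (g.1 = 1) Iff.rfl
instance : DecidablePred (· ∈ (⊥ : Subgroup Γ6)) := fun g =>
  decidable_of_iff (g = 1) (Subgroup.mem_bot).symm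
instance : DecidablePred (· ∈ (⊤ : Subgroup Γ6)) := fun _ =>
  decidable_of_iff True (by simp)

def x₀ : Γ6 := (Multiplicative.ofAdd 1, 1)
def y₀ : Γ6 := (1, Multiplicative.ofAdd 1)

lemma enum6 : ∀ g : Γ6, g = 1 ∨ g = x₀ ∨ g = x₀ * x₀ ∨ g = y₀ ∨ g = x₀ * y₀ ∨
    g = x₀ * x₀ * y₀ := by decide

lemma subgroup_classification (Δ : Subgroup Γ6) :
    Δ = ⊥ ∨ Δ = S2sub ∨ Δ = S3sub ∨ Δ = ⊤ := by
  by_cases hx : x₀ ∈ Δ <;> by_cases hy : y₀ ∈ Δ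
  · right; right; right
    ext g
    simp only [Subgroup.mem_top, iff_true]
    rcases enum6 g with rfl | rfl | rfl | rfl | rfl | rfl
    exacts [one_mem Δ, hx, mul_mem hx hx, hy, mul_mem hx hy, mul_mem (mul_mem hx hx) hy]
  · right; right; left
    ext g
    constructor
    · intro hg
      rcases enum6 g with rfl | rfl | rfl | rfl | rfl | rfl
      · exact one_mem _
      · decide
      · decide
      · exact absurd hg hy
      · have h2 : x₀⁻¹ * (x₀ * y₀) = y₀ := by decide
        exact absurd (h2 ▸ mul_mem (inv_mem hx) hg) hy
      · have h2 : x₀⁻¹ * (x₀⁻¹ * (x₀ * x₀ * y₀)) = y₀ := by decide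
        exact absurd (h2 ▸ mul_mem (inv_mem hx) (mul_mem (inv_mem hx) hg)) hy
    · intro hg
      rcases enum6 g with rfl | rfl | rfl | rfl | rfl | rfl
      · exact one_mem _
      · exact hx
      · exact mul_mem hx hx
      · exact absurd hg (by decide)
      · exact absurd hg (by decide)
      · exact absurd hg (by decide)
  · right; left
    ext g
    constructor
    · intro hg
      rcases enum6 g with rfl | rfl | rfl | rfl | rfl | rfl
      · exact one_mem _
      · exact absurd hg hx
      · have h2 : (x₀ * x₀) * (x₀ * x₀) = x₀ := by decide
        exact absurd (h2 ▸ mul_mem hg hg) hx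
      · decide
      · have h2 : (x₀ * y₀) * y₀⁻¹ = x₀ := by decide
        exact absurd (h2 ▸ mul_mem hg (inv_mem hy)) hx
      · have h2 : ((x₀ * x₀ * y₀) * y₀⁻¹) * ((x₀ * x₀ * y₀) * y₀⁻¹) = x₀ := by decide
        exact absurd (h2 ▸ mul_mem (mul_mem hg (inv_mem hy)) (mul_mem hg (inv_mem hy))) hx
    · intro hg
      rcases enum6 g with rfl | rfl | rfl | rfl | rfl | rfl
      · exact one_mem _
      · exact absurd hg (by decide)
      · exact absurd hg (by decide)
      · exact hy
      · exact absurd hg (by decide)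
      · exact absurd hg (by decide)
  · left
    ext g
    simp only [Subgroup.mem_bot]
    constructor
    · intro hg
      rcases enum6 g with rfl | rfl | rfl | rfl | rfl | rfl
      · rfl
      · exact absurd hg hx
      · have h2 : (x₀ * x₀) * (x₀ * x₀) = x₀ := by decide
        exact absurd (h2 ▸ mul_mem hg hg) hx
      · exact absurd hg hy
      · have h2 : ((x₀ * y₀) * (x₀ * y₀)) * ((x₀ * y₀) * (x₀ * y₀)) = x₀ := by decide
        exact absurd (h2 ▸ mul_mem (mul_mem hg hg) (mul_mem hg hg)) hx
      · have h2 : (x₀ * x₀ * y₀) * (x₀ * x₀ * y₀) = x₀ := by decide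
        exact absurd (h2 ▸ mul_mem hg hg) hx
    · rintro rfl
      exact one_mem _

/-- Reduce `QuotHarmonic` to a decidable statement. -/
lemma quotHarmonic_of_filter (Δ : Subgroup Γ6) [DecidablePred (· ∈ Δ)]
    (h : ∀ (x : Gr6.V) (e₁ e₂ : Gr6.E), ¬ A6.Vertical Δ e₁ → ¬ A6.Vertical Δ e₂ →
      (∃ v ∈ Gr6.ends e₁, A6.vrel Δ x v) → (∃ v ∈ Gr6.ends e₂, A6.vrel Δ x v) →
      (Finset.univ.filter (fun e => x ∈ Gr6.ends e ∧ A6.erel Δ e e₁)).card =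
      (Finset.univ.filter (fun e => x ∈ Gr6.ends e ∧ A6.erel Δ e e₂)).card) :
    A6.QuotHarmonic Δ := by
  intro x e₁ e₂ h1 h2 h3 h4
  have key := h x e₁ e₂ h1 h2 h3 h4
  have c1 : Nat.card {e : Gr6.E // x ∈ Gr6.ends e ∧ A6.erel Δ e e₁} =
      (Finset.univ.filter (fun e => x ∈ Gr6.ends e ∧ A6.erel Δ e e₁)).card := by
    rw [Nat.card_eq_fintype_card]
    exact Fintype.card_subtype _
  have c2 : Nat.card {e : Gr6.E // x ∈ Gr6.ends e ∧ A6.erel Δ e e₂} =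
      (Finset.univ.filter (fun e => x ∈ Gr6.ends e ∧ A6.erel Δ e e₂)).card := by
    rw [Nat.card_eq_fintype_card]
    exact Fintype.card_subtype _
  rw [c1, c2]
  exact key

set_option synthInstance.maxSize 1000 in
lemma harmonic_bot : A6.QuotHarmonic (⊥ : Subgroup Γ6) ∧ A6.QuotNondeg (⊥ : Subgroup Γ6) :=
  ⟨quotHarmonic_of_filter _ (by decide), by unfold GraphAction.QuotNondeg; decide⟩

set_option synthInstance.maxSize 1000 in
lemma harmonic_s2 : A6.QuotHarmonic S2sub ∧ A6.QuotNondeg S2sub :=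
  ⟨quotHarmonic_of_filter _ (by decide), by unfold GraphAction.QuotNondeg; decide⟩

set_option synthInstance.maxSize 1000 in
lemma harmonic_s3 : A6.QuotHarmonic S3sub ∧ A6.QuotNondeg S3sub :=
  ⟨quotHarmonic_of_filter _ (by decide), by unfold GraphAction.QuotNondeg; decide⟩

set_option synthInstance.maxSize 1000 in
lemma harmonic_top : A6.QuotHarmonic (⊤ : Subgroup Γ6) ∧ A6.QuotNondeg (⊤ : Subgroup Γ6) :=
  ⟨quotHarmonic_of_filter _ (by decide), by unfold GraphAction.QuotNondeg; decide⟩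

end Construction

/-- There is a graph of genus 2 on which the group
`ℤ/3ℤ × ℤ/2ℤ` of order `6 = 6(2 − 1)` acts harmonically. -/
theorem genus_two_hurwitz_action :
    ∃ (G : Multigraph)
      (A : GraphAction (Multiplicative (ZMod 3) × Multiplicative (ZMod 2)) G),
      G.genus = 2 ∧ A.ActsHarmonically := by
  refine ⟨Gr6, A6, ?_, ?_⟩
  · unfold Multigraph.genus
    decide
  · intro Δ
    rcases subgroup_classification Δ with rfl | rfl | rfl | rfl
    exacts [harmonic_bot, harmonic_s2, harmonic_s3, harmonic_top]
end

section
/- For every g ≥ 3, the group ℤ/2ℤ × D_{g−1} of order 4(g − 1) acts harmonically on the graph G_g of genus g obtained by joining g − 1 copies of the square graph (4 vertices, 4 edges) in a cycle, leaving a pair of opposite vertices in each square unattached; here D_{g−1} acts naturally on the cycle of squares and ℤ/2ℤ interchanges the inner and outer edges of the squares. Consequently M(g) ≥ 4(g − 1) for all g ≥ 2. -/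
open scoped Classical

/-! ### Auxiliary general lemmas -/

section AuxGeneral

variable {Γ : Type} [Group Γ] {G : Multigraph}

lemma sym2_exists {α : Type*} (z : Sym2 α) : ∃ a b, z = s(a, b) := by
  induction z using Sym2.ind with
  | _ a b => exact ⟨a, b, rfl⟩

namespace Multigraph

/-- The degree of a vertex. -/
noncomputable def deg (G : Multigraph) (x : G.V) : ℕ :=
  Nat.card {e : G.E // x ∈ G.ends e}

lemma exists_ends (G : Multigraph) (e : G.E) : ∃ a b, G.ends e = s(a, b) ∧ a ≠ b := by
  obtain ⟨a, b, hab⟩ := sym2_exists (G.ends e)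
  refine ⟨a, b, hab, fun h => G.loopless e ?_⟩
  rw [hab, h]
  exact Sym2.mk_isDiag_iff.2 rfl

lemma eq_of_deg_one {G : Multigraph} {x : G.V} (hx : G.deg x = 1) {f₁ f₂ : G.E}
    (h₁ : x ∈ G.ends f₁) (h₂ : x ∈ G.ends f₂) : f₁ = f₂ := by
  have hs := (Nat.card_eq_one_iff_unique.1 hx).1
  exact congrArg Subtype.val (Subsingleton.elim (⟨f₁, h₁⟩ : {e // x ∈ G.ends e}) ⟨f₂, h₂⟩)

lemma two_le_card_V (G : Multigraph) (hg : 2 ≤ G.genus) : 2 ≤ Fintype.card G.V := by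
  by_contra h
  push_neg at h
  have h1 : Fintype.card G.V ≤ 1 := by omega
  have hsub : Subsingleton G.V := Fintype.card_le_one_iff_subsingleton.1 h1
  have hE : Fintype.card G.E = 0 := by
    rw [Fintype.card_eq_zero_iff]
    refine ⟨fun e => G.loopless e ?_⟩
    obtain ⟨a, b, hab⟩ := sym2_exists (G.ends e)
    rw [hab]
    exact Sym2.mk_isDiag_iff.2 (Subsingleton.elim a b)
  have hV : 1 ≤ Fintype.card G.V := Fintype.card_pos_iff.2 G.connected.nonempty
  unfold genus at hg
  omega

lemma sum_deg (G : Multigraph) : ∑ x : G.V, G.deg x = 2 * Fintype.card G.E := by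
  have h1 : ∀ x : G.V, G.deg x = (Finset.univ.filter (fun e => x ∈ G.ends e)).card := by
    intro x
    rw [deg, Nat.card_eq_fintype_card, Fintype.card_subtype]
  calc ∑ x : G.V, G.deg x
      = ∑ x : G.V, ∑ e : G.E, if x ∈ G.ends e then 1 else 0 := by
        simp only [h1, Finset.card_filter]
    _ = ∑ e : G.E, ∑ x : G.V, if x ∈ G.ends e then 1 else 0 := Finset.sum_comm
    _ = ∑ e : G.E, 2 := by
        refine Finset.sum_congr rfl fun e _ => ?_
        obtain ⟨a, b, hab, hne⟩ := G.exists_ends e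
        have hfil : (Finset.univ.filter (fun x => x ∈ G.ends e)) = {a, b} := by
          ext x
          simp [hab, Sym2.mem_iff]
        rw [← Finset.card_filter, hfil, Finset.card_insert_of_notMem (by simp [hne]),
          Finset.card_singleton]
    _ = 2 * Fintype.card G.E := by
        simp [mul_comm]

lemma deg_pos (G : Multigraph) (hg : 2 ≤ G.genus) (x : G.V) : 1 ≤ G.deg x := by
  have h2 := G.two_le_card_V hg
  obtain ⟨y, hy⟩ := Fintype.exists_ne_of_one_lt_card (by omega) x
  obtain ⟨w⟩ := G.connected.preconnected x y
  obtain ⟨e, he⟩ : ∃ e : G.E, x ∈ G.ends e := by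
    cases w with
    | nil => exact absurd rfl hy.symm
    | cons h p =>
      rw [SimpleGraph.fromRel_adj] at h
      rcases h.2 with ⟨e, he⟩ | ⟨e, he⟩
      · exact ⟨e, by rw [he]; exact Sym2.mem_mk_left _ _⟩
      · exact ⟨e, by rw [he]; exact Sym2.mem_mk_right _ _⟩
  have : Nonempty {e : G.E // x ∈ G.ends e} := ⟨⟨e, he⟩⟩
  exact Nat.card_pos

lemma exists_deg_ge_three (G : Multigraph) (hg : 2 ≤ G.genus) : ∃ x : G.V, 3 ≤ G.deg x := by
  by_contra h
  push_neg at h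
  have hsum : ∑ x : G.V, G.deg x ≤ ∑ _x : G.V, 2 :=
    Finset.sum_le_sum fun x _ => by have := h x; omega
  rw [G.sum_deg] at hsum
  simp only [Finset.sum_const, Finset.card_univ, smul_eq_mul] at hsum
  unfold genus at hg
  omega

lemma no_leaf_edge (G : Multigraph) (hg : 2 ≤ G.genus) {e : G.E} {a b : G.V}
    (hab : G.ends e = s(a, b)) (ha : G.deg a = 1) (hb : G.deg b = 1) : False := by
  have key : ∀ (y z : G.V)
      (_ : (SimpleGraph.fromRel fun x y : G.V => ∃ e : G.E, G.ends e = s(x, y)).Walk y z),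
      y = a ∨ y = b → z = a ∨ z = b := by
    intro y z w
    induction w with
    | nil => exact id
    | @cons y c z h p ih =>
      intro hy
      apply ih
      rw [SimpleGraph.fromRel_adj] at h
      obtain ⟨f, hf, hcf⟩ : ∃ f : G.E, y ∈ G.ends f ∧ c ∈ G.ends f := by
        rcases h.2 with ⟨f, hf⟩ | ⟨f, hf⟩
        · exact ⟨f, by rw [hf]; exact Sym2.mem_mk_left _ _, by rw [hf]; exact Sym2.mem_mk_right _ _⟩
        · exact ⟨f, by rw [hf]; exact Sym2.mem_mk_right _ _, by rw [hf]; exact Sym2.mem_mk_left _ _⟩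
      have hymem : y ∈ G.ends e := by
        rw [hab]
        rcases hy with rfl | rfl
        · exact Sym2.mem_mk_left _ _
        · exact Sym2.mem_mk_right _ _
      have hfe : f = e := by
        rcases hy with rfl | rfl
        · exact G.eq_of_deg_one ha hf hymem
        · exact G.eq_of_deg_one hb hf hymem
      rw [hfe, hab, Sym2.mem_iff] at hcf
      exact hcf
  obtain ⟨x₀, hx₀⟩ := G.exists_deg_ge_three hg
  obtain ⟨w⟩ := G.connected.preconnected a x₀
  rcases key a x₀ w (Or.inl rfl) with rfl | rfl <;> omega

end Multigraph

namespace GraphAction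

/-- A group action has *free stars* if any element fixing a vertex and an edge incident to
it is trivial. -/
def FreeStar (A : GraphAction Γ G) : Prop :=
  ∀ (γ : Γ) (x : G.V) (e : G.E), x ∈ G.ends e → A.actV γ x = x → A.actE γ e = e → γ = 1

lemma mem_ends_map (A : GraphAction Γ G) (γ : Γ) {x : G.V} {e : G.E} (h : x ∈ G.ends e) :
    A.actV γ x ∈ G.ends (A.actE γ e) := by
  rw [A.ends_map]
  exact Sym2.mem_map.2 ⟨x, h, rfl⟩

lemma actV_inv_eq (A : GraphAction Γ G) {δ : Γ} {x v : G.V} (h : A.actV δ x = v) :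
    A.actV δ⁻¹ v = x := by
  rw [map_inv, ← h]
  exact Equiv.symm_apply_apply _ _

lemma actE_inv_eq (A : GraphAction Γ G) {δ : Γ} {e f : G.E} (h : A.actE δ e = f) :
    A.actE δ⁻¹ f = e := by
  rw [map_inv, ← h]
  exact Equiv.symm_apply_apply _ _

lemma finite (A : GraphAction Γ G) : Finite Γ := by
  apply Finite.of_injective (fun γ => (A.actV γ, A.actE γ))
  intro a b h
  rw [Prod.mk.injEq] at h
  have h1 : b⁻¹ * a = 1 := by
    apply A.faithful
    · intro x
      rw [map_mul, Equiv.Perm.mul_apply, h.1, map_inv, Equiv.Perm.inv_def, Equiv.symm_apply_apply]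
    · intro e
      rw [map_mul, Equiv.Perm.mul_apply, h.2, map_inv, Equiv.Perm.inv_def, Equiv.symm_apply_apply]
  rwa [inv_mul_eq_one, eq_comm] at h1

lemma actV_apply_inv_apply (A : GraphAction Γ G) (γ : Γ) (x : G.V) :
    A.actV γ (A.actV γ⁻¹ x) = x := by
  rw [map_inv]; exact Equiv.apply_symm_apply _ _

lemma actE_apply_inv_apply (A : GraphAction Γ G) (γ : Γ) (e : G.E) :
    A.actE γ (A.actE γ⁻¹ e) = e := by
  rw [map_inv]; exact Equiv.apply_symm_apply _ _

lemma deg_act (A : GraphAction Γ G) (γ : Γ) (x : G.V) : G.deg (A.actV γ x) = G.deg x := by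
  apply Nat.card_congr
  refine Equiv.subtypeEquiv (A.actE γ⁻¹) fun e => ⟨fun h => ?_, fun h => ?_⟩
  · have h2 := A.mem_ends_map γ⁻¹ h
    rwa [A.actV_inv_eq rfl] at h2
  · have h2 := A.mem_ends_map γ h
    rwa [A.actE_apply_inv_apply] at h2

end GraphAction

end AuxGeneral

section AuxHarm

variable {Γ : Type} [Group Γ] {G : Multigraph}

namespace GraphAction

lemma vrel_refl (A : GraphAction Γ G) (Δ : Subgroup Γ) (x : G.V) : A.vrel Δ x x :=
  ⟨1, Δ.one_mem, by simp⟩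

theorem quotHarmonic_of_freeStar (A : GraphAction Γ G) (hfree : A.FreeStar) (Δ : Subgroup Γ) :
    A.QuotHarmonic Δ := by
  intro x e₁ e₂ hnv₁ hnv₂ hex₁ hex₂
  suffices H : ∀ e : G.E, ¬ A.Vertical Δ e → (∃ v ∈ G.ends e, A.vrel Δ x v) →
      Nat.card {f : G.E // x ∈ G.ends f ∧ A.erel Δ f e} =
      Nat.card {γ : Γ // γ ∈ Δ ∧ A.actV γ x = x} by
    rw [H e₁ hnv₁ hex₁, H e₂ hnv₂ hex₂]
  rintro e hnv ⟨v, hv, δ₀, hδ₀, hδ₀x⟩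
  have key : ∀ γ : Γ, γ ∈ Δ → A.actV γ x ∈ G.ends e → A.actV γ x = v := by
    intro γ hγ hmem
    obtain ⟨w, hw⟩ := Sym2.mem_iff_exists.1 hv
    rw [hw, Sym2.mem_iff] at hmem
    rcases hmem with h | h
    · exact h
    · by_cases hwv : w = v
      · rw [h, hwv]
      · exfalso
        refine hnv ⟨v, w, hw, γ * δ₀⁻¹, Δ.mul_mem hγ (Δ.inv_mem hδ₀), ?_⟩
        rw [map_mul, Equiv.Perm.mul_apply, A.actV_inv_eq hδ₀x, h]
  have eq1 : Nat.card {f : G.E // x ∈ G.ends f ∧ A.erel Δ f e} =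
      Nat.card {γ : Γ // γ ∈ Δ ∧ A.actV γ x ∈ G.ends e} := by
    refine (Nat.card_congr (Equiv.ofBijective
      (fun γp : {γ : Γ // γ ∈ Δ ∧ A.actV γ x ∈ G.ends e} =>
        (⟨A.actE γp.1⁻¹ e, ?_, γp.1, γp.2.1, A.actE_apply_inv_apply _ _⟩ :
          {f : G.E // x ∈ G.ends f ∧ A.erel Δ f e})) ⟨?_, ?_⟩)).symm
    · have h2 := A.mem_ends_map γp.1⁻¹ γp.2.2
      rwa [A.actV_inv_eq rfl] at h2
    · rintro ⟨γ₁, hγ₁, hm₁⟩ ⟨γ₂, hγ₂, hm₂⟩ hEq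
      simp only [Subtype.mk.injEq] at hEq ⊢
      have hfix : A.actE (γ₂ * γ₁⁻¹) e = e := by
        rw [map_mul, Equiv.Perm.mul_apply, hEq]
        exact A.actE_apply_inv_apply _ _
      have hvfix : A.actV (γ₂ * γ₁⁻¹) v = v := by
        rw [map_mul, Equiv.Perm.mul_apply, A.actV_inv_eq (key γ₁ hγ₁ hm₁), key γ₂ hγ₂ hm₂]
      have := hfree (γ₂ * γ₁⁻¹) v e hv hvfix hfix
      rw [mul_inv_eq_one] at this
      exact this.symm
    · rintro ⟨f, hxf, δ', hδ', hδ'f⟩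
      refine ⟨⟨δ', hδ', ?_⟩, ?_⟩
      · rw [← hδ'f]
        exact A.mem_ends_map δ' hxf
      · simp only [Subtype.mk.injEq]
        exact A.actE_inv_eq hδ'f
  have eq2 : Nat.card {γ : Γ // γ ∈ Δ ∧ A.actV γ x ∈ G.ends e} =
      Nat.card {γ : Γ // γ ∈ Δ ∧ A.actV γ x = x} := by
    refine Nat.card_congr (Equiv.ofBijective
      (fun γp => ⟨δ₀⁻¹ * γp.1, Δ.mul_mem (Δ.inv_mem hδ₀) γp.2.1, ?_⟩) ⟨?_, ?_⟩)
    · rw [map_mul, Equiv.Perm.mul_apply, key γp.1 γp.2.1 γp.2.2, A.actV_inv_eq hδ₀x]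
    · rintro ⟨γ₁, h₁⟩ ⟨γ₂, h₂⟩ hEq
      simp only [Subtype.mk.injEq, mul_right_inj] at hEq ⊢
      exact hEq
    · rintro ⟨γ, hγ, hγx⟩
      refine ⟨⟨δ₀ * γ, Δ.mul_mem hδ₀ hγ, ?_⟩, ?_⟩
      · rw [map_mul, Equiv.Perm.mul_apply, hγx, hδ₀x]
        exact hv
      · simp only [Subtype.mk.injEq]
        group
  rw [eq1, eq2]

theorem freeStar_of_actsHarmonically (A : GraphAction Γ G) (h : A.ActsHarmonically) :
    A.FreeStar := by
  have stepA : ∀ (γ : Γ) (x : G.V) (e : G.E), x ∈ G.ends e → A.actV γ x = x →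
      A.actE γ e = e → ∀ f : G.E, x ∈ G.ends f → A.actE γ f = f := by
    intro γ x e hxe hγx hγe f hxf
    set Δ := Subgroup.zpowers γ with hΔ
    have hfixV : ∀ δ ∈ Δ, A.actV δ x = x := by
      intro δ hδ
      obtain ⟨k, rfl⟩ := Subgroup.mem_zpowers_iff.1 hδ
      rw [map_zpow]
      exact Equiv.Perm.zpow_apply_eq_self_of_apply_eq_self hγx k
    have hfixE : ∀ δ ∈ Δ, A.actE δ e = e := by
      intro δ hδ
      obtain ⟨k, rfl⟩ := Subgroup.mem_zpowers_iff.1 hδ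
      rw [map_zpow]
      exact Equiv.Perm.zpow_apply_eq_self_of_apply_eq_self hγe k
    have hnv : ∀ f' : G.E, x ∈ G.ends f' → ¬ A.Vertical Δ f' := by
      rintro f' hxf' ⟨a, b, hab, δ, hδ, hδa⟩
      rw [hab, Sym2.mem_iff] at hxf'
      rcases hxf' with rfl | rfl
      · refine G.loopless f' ?_
        rw [hab]
        exact Sym2.mk_isDiag_iff.2 (by rw [← hδa, hfixV δ hδ])
      · have hax : a = x := (A.actV δ).injective (hδa.trans (hfixV δ hδ).symm)
        refine G.loopless f' ?_
        rw [hab]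
        exact Sym2.mk_isDiag_iff.2 hax
    have harm := (h Δ).1 x e f (hnv e hxe) (hnv f hxf)
      ⟨x, hxe, A.vrel_refl Δ x⟩ ⟨x, hxf, A.vrel_refl Δ x⟩
    have hL : Nat.card {h' : G.E // x ∈ G.ends h' ∧ A.erel Δ h' e} = 1 := by
      rw [Nat.card_eq_one_iff_unique]
      constructor
      · constructor
        rintro ⟨h₁, hx₁, δ, hδ, hδ₁⟩ ⟨h₂, hx₂, δ', hδ', hδ₂⟩
        have e₁ : h₁ = e := (A.actE δ).injective (by rw [hδ₁, hfixE δ hδ])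
        have e₂ : h₂ = e := (A.actE δ').injective (by rw [hδ₂, hfixE δ' hδ'])
        simp [e₁, e₂]
      · exact ⟨⟨e, hxe, 1, Δ.one_mem, by simp⟩⟩
    rw [hL] at harm
    have hsub := (Nat.card_eq_one_iff_unique.1 harm.symm).1
    have hmem : x ∈ G.ends (A.actE γ⁻¹ f) := by
      have h2 := A.mem_ends_map γ⁻¹ hxf
      rwa [A.actV_inv_eq hγx] at h2
    have hpair := Subsingleton.elim
      (⟨f, hxf, 1, Δ.one_mem, by simp⟩ : {h' : G.E // x ∈ G.ends h' ∧ A.erel Δ h' f})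
      ⟨A.actE γ⁻¹ f, hmem, γ, Subgroup.mem_zpowers γ, A.actE_apply_inv_apply _ _⟩
    have hvaleq := congrArg Subtype.val hpair
    simp only at hvaleq
    have h3 : A.actE γ (A.actE γ⁻¹ f) = f := A.actE_apply_inv_apply γ f
    rw [← hvaleq] at h3
    exact h3
  intro γ x e hxe hγx hγe
  set P : G.V → Prop := fun y => A.actV γ y = y ∧ ∀ f : G.E, y ∈ G.ends f → A.actE γ f = f
    with hP
  have hPx : P x := ⟨hγx, stepA γ x e hxe hγx hγe⟩
  have hstep : ∀ y w : G.V, P y →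
      (SimpleGraph.fromRel fun a b : G.V => ∃ e : G.E, G.ends e = s(a, b)).Adj y w → P w := by
    rintro y w ⟨hy, hyE⟩ hadj
    rw [SimpleGraph.fromRel_adj] at hadj
    obtain ⟨f, hf⟩ : ∃ f : G.E, G.ends f = s(y, w) := by
      rcases hadj.2 with ⟨f, hf⟩ | ⟨f, hf⟩
      · exact ⟨f, hf⟩
      · exact ⟨f, by rw [hf, Sym2.eq_swap]⟩
    have hyf : y ∈ G.ends f := by rw [hf]; exact Sym2.mem_mk_left _ _
    have hγf := hyE f hyf
    have hγw : A.actV γ w = w := by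
      have hh := A.ends_map γ f
      rw [hγf, hf, Sym2.map_pair_eq, hy] at hh
      rw [Sym2.eq_iff] at hh
      rcases hh with ⟨-, hw2⟩ | ⟨h1, h2⟩
      · exact hw2.symm
      · exact absurd h2.symm hadj.1
    have hwf : w ∈ G.ends f := by rw [hf]; exact Sym2.mem_mk_right _ _
    exact ⟨hγw, stepA γ w f hwf hγw hγf⟩
  have hall : ∀ y : G.V, P y := by
    have hwalk : ∀ (y z : G.V), P y →
        (SimpleGraph.fromRel fun a b : G.V => ∃ e : G.E, G.ends e = s(a, b)).Walk y z → P z := by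
      intro y z hy w
      induction w with
      | nil => exact hy
      | @cons u c z h p ih => exact ih (hstep u c hy h)
    intro y
    obtain ⟨w⟩ := G.connected.preconnected x y
    exact hwalk x y hPx w
  apply A.faithful γ (fun y => (hall y).1)
  intro f
  obtain ⟨a, b, hab⟩ := sym2_exists (G.ends f)
  exact (hall a).2 f (by rw [hab]; exact Sym2.mem_mk_left _ _)

end GraphAction

end AuxHarm

section MainBound

open GraphAction

theorem main_bound (N : ℕ) :
    ∀ (G : Multigraph) (Γ : Type) [Group Γ] (A : GraphAction Γ G) (g : ℕ),
      2 ≤ g → G.genus = (g : ℤ) → A.FreeStar → Fintype.card G.V ≤ N →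
      Nat.card Γ ≤ 6 * (g - 1) := by
  induction N with
  | zero =>
    intro G Γ _ A g hg hgen hfree hcard
    have : 1 ≤ Fintype.card G.V := Fintype.card_pos_iff.2 G.connected.nonempty
    omega
  | succ N ih =>
    intro G Γ instΓ A g hg hgen hfree hcard
    haveI hΓfin : Finite Γ := A.finite
    letI : Fintype Γ := Fintype.ofFinite Γ
    letI : MulAction Γ G.V := MulAction.compHom _ A.actV
    have hsmul : ∀ (γ : Γ) (x : G.V), γ • x = A.actV γ x := fun _ _ => rfl
    have hgenus2 : 2 ≤ G.genus := by rw [hgen]; exact_mod_cast hg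
    have hEV : Fintype.card G.E = Fintype.card G.V + (g - 1) := by
      unfold Multigraph.genus at hgen
      omega
    -- stabilizer cardinality bound
    have hstab_le : ∀ x : G.V, Nat.card (MulAction.stabilizer Γ x) ≤ G.deg x := by
      intro x
      have hpos := G.deg_pos hgenus2 x
      have hne : Nonempty {e : G.E // x ∈ G.ends e} := by
        unfold Multigraph.deg at hpos
        exact (Nat.card_pos_iff.1 hpos).1
      obtain ⟨e₀, he₀⟩ := hne
      have hinj : Function.Injective
          (fun δ : MulAction.stabilizer Γ x => (⟨A.actE δ.1 e₀, by
            have h2 := A.mem_ends_map δ.1 he₀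
            have h3 : A.actV δ.1 x = x := by rw [← hsmul]; exact δ.2
            rwa [h3] at h2⟩ : {e : G.E // x ∈ G.ends e})) := by
        rintro ⟨δ₁, h₁⟩ ⟨δ₂, h₂⟩ hEq
        simp only [Subtype.mk.injEq] at hEq ⊢
        have hfixe : A.actE (δ₂⁻¹ * δ₁) e₀ = e₀ := by
          rw [map_mul, Equiv.Perm.mul_apply, hEq, ← Equiv.Perm.mul_apply, ← map_mul,
            inv_mul_cancel, map_one, Equiv.Perm.one_apply]
        have hfixv : A.actV (δ₂⁻¹ * δ₁) x = x := by
          rw [MulAction.mem_stabilizer_iff] at h₁ h₂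
          rw [← hsmul, mul_smul, h₁]
          exact inv_smul_eq_iff.2 h₂.symm
        have h4 := hfree _ x e₀ he₀ hfixv hfixe
        rw [inv_mul_eq_one] at h4
        exact h4.symm
      exact Nat.card_le_card_of_injective _ hinj
    -- orbit-stabilizer
    have horbstab : ∀ x : G.V,
        (MulAction.orbit Γ x).toFinset.card * Nat.card (MulAction.stabilizer Γ x) =
          Nat.card Γ := by
      intro x
      have h := MulAction.card_orbit_mul_card_stabilizer_eq_card_group Γ x
      rw [Nat.card_eq_fintype_card, Nat.card_eq_fintype_card, ← h, Set.toFinset_card]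
    -- degree is constant on orbits
    have hdeg_orbit : ∀ (x y : G.V), y ∈ MulAction.orbit Γ x → G.deg y = G.deg x := by
      rintro x y ⟨γ, rfl⟩
      exact A.deg_act γ x
    have horb_card_le : ∀ x : G.V, (MulAction.orbit Γ x).toFinset.card ≤ Fintype.card G.V :=
      fun x => Finset.card_le_card (Finset.subset_univ _)
    have horb_pos : ∀ x : G.V, 1 ≤ (MulAction.orbit Γ x).toFinset.card := by
      intro x
      refine Finset.card_pos.2 ⟨x, ?_⟩
      rw [Set.mem_toFinset]
      exact MulAction.mem_orbit_self x
    by_cases hleaf : ∃ z : G.V, G.deg z = 1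
    · obtain ⟨z, hz⟩ := hleaf
      set O : Set G.V := MulAction.orbit Γ z with hO
      have hOdeg : ∀ y ∈ O, G.deg y = 1 := by
        intro y hy
        rw [hdeg_orbit z y hy, hz]
      have hOmem : ∀ (γ : Γ) (y : G.V), A.actV γ y ∈ O ↔ y ∈ O := by
        intro γ y
        constructor
        · rintro ⟨δ, hδ⟩
          refine ⟨γ⁻¹ * δ, ?_⟩
          have hδ' : δ • z = A.actV γ y := hδ
          show (γ⁻¹ * δ) • z = y
          rw [mul_smul, hδ', ← hsmul, inv_smul_smul]
        · rintro ⟨δ, hδ⟩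
          refine ⟨γ * δ, ?_⟩
          have hδ' : δ • z = y := hδ
          show (γ * δ) • z = A.actV γ y
          rw [mul_smul, hδ', hsmul]
      obtain ⟨x₀, hx₀3⟩ := G.exists_deg_ge_three hgenus2
      have hx₀O : x₀ ∉ O := fun h => by have := hOdeg x₀ h; omega
      set P : G.E → Prop := fun e => ∀ v ∈ G.ends e, v ∉ O with hPdef
      have hedge : ∀ y : G.V, ∃ e : G.E, y ∈ G.ends e := by
        intro y
        have h1 := G.deg_pos hgenus2 y
        unfold Multigraph.deg at h1
        obtain ⟨e, he⟩ := (Nat.card_pos_iff.1 h1).1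
        exact ⟨e, he⟩
      have hPiff : ∀ e : G.E, ¬ P e ↔ ∃ v ∈ G.ends e, v ∈ O := by
        intro e
        rw [hPdef]
        simp only [not_forall, Classical.not_imp, not_not, exists_prop]
      -- the unique edge at each vertex of `O`, giving a bijection with non-`P` edges
      let uedge : {x : G.V // x ∈ O} → G.E := fun xp => Classical.choose (hedge xp.1)
      have huedge : ∀ xp : {x : G.V // x ∈ O}, xp.1 ∈ G.ends (uedge xp) :=
        fun xp => Classical.choose_spec (hedge xp.1)
      have hnotP : ∀ xp, ¬ P (uedge xp) := fun xp hP => hP xp.1 (huedge xp) xp.2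
      have hbij : Function.Bijective
          (fun xp : {x : G.V // x ∈ O} => (⟨uedge xp, hnotP xp⟩ : {e : G.E // ¬ P e})) := by
        constructor
        · rintro ⟨x₁, hx₁⟩ ⟨x₂, hx₂⟩ hEq
          simp only [Subtype.mk.injEq] at hEq ⊢
          by_contra hne
          have hm1 := huedge ⟨x₁, hx₁⟩
          have hm2 := huedge ⟨x₂, hx₂⟩
          rw [← hEq] at hm2
          obtain ⟨a, b, hab, hneab⟩ := G.exists_ends (uedge ⟨x₁, hx₁⟩)
          have hm1' := hm1; have hm2' := hm2
          rw [hab, Sym2.mem_iff] at hm1' hm2'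
          have hends12 : G.ends (uedge ⟨x₁, hx₁⟩) = s(x₁, x₂) := by
            rw [hab]
            rcases hm1' with rfl | rfl <;> rcases hm2' with rfl | rfl
            · exact absurd rfl hne
            · rfl
            · exact Sym2.eq_swap
            · exact absurd rfl hne
          exact G.no_leaf_edge hgenus2 hends12 (hOdeg x₁ hx₁) (hOdeg x₂ hx₂)
        · rintro ⟨e, hne⟩
          obtain ⟨v, hv, hvO⟩ := (hPiff e).1 hne
          refine ⟨⟨v, hvO⟩, ?_⟩
          simp only [Subtype.mk.injEq]
          exact G.eq_of_deg_one (hOdeg v hvO) (huedge ⟨v, hvO⟩) hv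
      have hcardeq : Fintype.card {x : G.V // x ∈ O} = Fintype.card {e : G.E // ¬ P e} :=
        Fintype.card_of_bijective hbij
      have hE'ne : Nonempty {e : G.E // P e} := by
        by_contra hEmpty
        rw [not_nonempty_iff] at hEmpty
        have hfun : ∀ e : G.E, ∃ v, v ∈ G.ends e ∧ v ∈ O := by
          intro e
          have hne : ¬ P e := fun hp => hEmpty.false ⟨e, hp⟩
          obtain ⟨v, hv1, hv2⟩ := (hPiff e).1 hne
          exact ⟨v, hv1, hv2⟩
        have hinj : Function.Injective (fun e : G.E => Classical.choose (hfun e)) := by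
          intro e₁ e₂ hEq
          have hEq' : Classical.choose (hfun e₁) = Classical.choose (hfun e₂) := hEq
          have s₁ := Classical.choose_spec (hfun e₁)
          have s₂ := Classical.choose_spec (hfun e₂)
          rw [hEq'] at s₁
          exact G.eq_of_deg_one (hOdeg _ s₂.2) s₁.1 s₂.1
        have hle : Fintype.card G.E ≤ Fintype.card G.V := Fintype.card_le_of_injective _ hinj
        omega
      -- the pruned graph
      have hloop' : ∀ e : {e : G.E // P e},
          ¬ ((G.ends e.1).attachWith (P := fun x => x ∉ O) e.2).IsDiag := by
        intro e h
        obtain ⟨a, b, hab⟩ := sym2_exists ((G.ends e.1).attachWith (P := fun x => x ∉ O) e.2)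
        rw [hab] at h
        have hab2 : a = b := Sym2.mk_isDiag_iff.1 h
        apply G.loopless e.1
        have hm := Sym2.attachWith_map_subtypeVal (s := G.ends e.1) e.2
        rw [hab, hab2, Sym2.map_pair_eq] at hm
        rw [← hm]
        exact Sym2.mk_isDiag_iff.2 rfl
      have hadj' : ∀ (a b : G.V) (ha : a ∉ O) (hb : b ∉ O),
          (SimpleGraph.fromRel fun x y : G.V => ∃ e : G.E, G.ends e = s(x, y)).Adj a b →
          (SimpleGraph.fromRel fun x y : {v : G.V // v ∉ O} =>
            ∃ e : {e : G.E // P e}, (G.ends e.1).attachWith e.2 = s(x, y)).Adj ⟨a, ha⟩ ⟨b, hb⟩ := by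
        intro a b ha hb hadj
        rw [SimpleGraph.fromRel_adj] at hadj ⊢
        obtain ⟨f, hf⟩ : ∃ f : G.E, G.ends f = s(a, b) := by
          rcases hadj.2 with ⟨f, hf⟩ | ⟨f, hf⟩
          exacts [⟨f, hf⟩, ⟨f, by rw [hf, Sym2.eq_swap]⟩]
        have hPf : P f := by
          intro v hv
          rw [hf, Sym2.mem_iff] at hv
          rcases hv with rfl | rfl
          exacts [ha, hb]
        refine ⟨fun hc => hadj.1 (congrArg Subtype.val hc), Or.inl ⟨⟨f, hPf⟩, ?_⟩⟩
        apply Sym2.map.injective Subtype.val_injective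
        rw [Sym2.attachWith_map_subtypeVal, Sym2.map_pair_eq, hf]
      have hshort : ∀ (n : ℕ) (a b : G.V) (ha : a ∉ O) (hb : b ∉ O)
          (w : (SimpleGraph.fromRel fun x y : G.V => ∃ e : G.E, G.ends e = s(x, y)).Walk a b),
          w.length ≤ n →
          (SimpleGraph.fromRel fun x y : {v : G.V // v ∉ O} =>
            ∃ e : {e : G.E // P e}, (G.ends e.1).attachWith e.2 = s(x, y)).Reachable
            ⟨a, ha⟩ ⟨b, hb⟩ := by
        intro n
        induction n with
        | zero =>
          intro a b ha hb w hlen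
          cases w with
          | nil => exact SimpleGraph.Reachable.refl _
          | cons h p => simp [SimpleGraph.Walk.length_cons] at hlen
        | succ n ihn =>
          intro a b ha hb w hlen
          cases w with
          | nil => exact SimpleGraph.Reachable.refl _
          | @cons _ c _ h p =>
            by_cases hc : c ∈ O
            · cases p with
              | nil => exact absurd hc hb
              | @cons _ d _ h₂ q =>
                obtain ⟨f₁, hf₁⟩ : ∃ f : G.E, G.ends f = s(c, a) := by
                  have h' := h
                  rw [SimpleGraph.fromRel_adj] at h'
                  rcases h'.2 with ⟨f, hf⟩ | ⟨f, hf⟩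
                  exacts [⟨f, by rw [hf, Sym2.eq_swap]⟩, ⟨f, hf⟩]
                obtain ⟨f₂, hf₂⟩ : ∃ f : G.E, G.ends f = s(c, d) := by
                  have h' := h₂
                  rw [SimpleGraph.fromRel_adj] at h'
                  rcases h'.2 with ⟨f, hf⟩ | ⟨f, hf⟩
                  exacts [⟨f, hf⟩, ⟨f, by rw [hf, Sym2.eq_swap]⟩]
                have hfeq : f₁ = f₂ := G.eq_of_deg_one (hOdeg c hc)
                  (by rw [hf₁]; exact Sym2.mem_mk_left _ _)
                  (by rw [hf₂]; exact Sym2.mem_mk_left _ _)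
                have had : a = d := by
                  rw [hfeq, hf₂] at hf₁
                  rcases Sym2.eq_iff.1 hf₁ with ⟨-, h'⟩ | ⟨h1', -⟩
                  · exact h'.symm
                  · exact absurd h1'.symm h.ne
                subst had
                apply ihn a b ha hb q
                simp only [SimpleGraph.Walk.length_cons] at hlen
                omega
            · refine ((hadj' a c ha hc h).reachable).trans (ihn c b hc hb p ?_)
              simp only [SimpleGraph.Walk.length_cons] at hlen
              omega
      let G' : Multigraph := {
        V := {v : G.V // v ∉ O}
        E := {e : G.E // P e}
        ends := fun e => (G.ends e.1).attachWith e.2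
        loopless := hloop'
        connected := by
          rw [SimpleGraph.connected_iff]
          refine ⟨?_, ⟨⟨x₀, hx₀O⟩⟩⟩
          rintro ⟨a, ha⟩ ⟨b, hb⟩
          obtain ⟨w⟩ := G.connected.preconnected a b
          exact hshort w.length a b ha hb w le_rfl }
      have hends'map : ∀ e : G'.E, (G'.ends e).map Subtype.val = G.ends e.1 :=
        fun e => Sym2.attachWith_map_subtypeVal e.2
      have hOmemE : ∀ (γ : Γ) (e : G.E), P e ↔ P (A.actE γ e) := by
        intro γ e
        constructor
        · intro hp v hv
          rw [A.ends_map, Sym2.mem_map] at hv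
          obtain ⟨w, hw, rfl⟩ := hv
          rw [hOmem]
          exact hp w hw
        · intro hp v hv
          have h2 := hp _ (A.mem_ends_map γ hv)
          rw [hOmem] at h2
          exact h2
      let A' : GraphAction Γ G' := {
        actV := MonoidHom.mk'
          (fun γ => (A.actV γ).subtypePerm
            (fun x => not_iff_not.2 (hOmem γ x)))
          (by
            intro γ δ
            ext x
            simp [Equiv.Perm.subtypePerm_apply, map_mul])
        actE := MonoidHom.mk'
          (fun γ => (A.actE γ).subtypePerm
            (fun e => (hOmemE γ e).symm))
          (by
            intro γ δ
            ext e
            simp [Equiv.Perm.subtypePerm_apply, map_mul])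
        ends_map := by
          intro γ e
          obtain ⟨a, b, hab⟩ := sym2_exists (G'.ends e)
          rw [hab, Sym2.map_pair_eq]
          apply Sym2.map.injective Subtype.val_injective
          rw [hends'map, Sym2.map_pair_eq]
          show G.ends (A.actE γ e.1) = s(A.actV γ a.1, A.actV γ b.1)
          have h4 : G.ends e.1 = s(a.1, b.1) := by
            rw [← hends'map e, hab, Sym2.map_pair_eq]
          rw [A.ends_map, h4, Sym2.map_pair_eq]
        faithful := by
          intro γ hV' hE'
          obtain ⟨e'⟩ := hE'ne
          obtain ⟨a, b, hab⟩ := sym2_exists (G.ends e'.1)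
          have haO : a ∉ O := e'.2 a (by rw [hab]; exact Sym2.mem_mk_left _ _)
          apply hfree γ a e'.1 (by rw [hab]; exact Sym2.mem_mk_left _ _)
          · exact congrArg Subtype.val (hV' ⟨a, haO⟩)
          · exact congrArg Subtype.val (hE' e') }
      have hfree' : A'.FreeStar := by
        intro γ x' e' hmem hvfix hefix
        apply hfree γ x'.1 e'.1
        · have h2 : x'.1 ∈ (G'.ends e').map Subtype.val := Sym2.mem_map.2 ⟨x', hmem, rfl⟩
          rwa [hends'map] at h2
        · exact congrArg Subtype.val hvfix
        · exact congrArg Subtype.val hefix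
      have hk1 : 1 ≤ Fintype.card {x : G.V // x ∈ O} :=
        Fintype.card_pos_iff.2 ⟨⟨z, MulAction.mem_orbit_self z⟩⟩
      have hkV : Fintype.card {x : G.V // x ∈ O} ≤ Fintype.card G.V :=
        Fintype.card_subtype_le _
      have hcV' : Fintype.card {v : G.V // v ∉ O} =
          Fintype.card G.V - Fintype.card {x : G.V // x ∈ O} :=
        Fintype.card_subtype_compl _
      have hcEc : Fintype.card {e : G.E // ¬ P e} =
          Fintype.card G.E - Fintype.card {e : G.E // P e} :=
        Fintype.card_subtype_compl _
      have hcEle : Fintype.card {e : G.E // P e} ≤ Fintype.card G.E :=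
        Fintype.card_subtype_le _
      have hgV : Fintype.card G'.V = Fintype.card {v : G.V // v ∉ O} :=
        Fintype.card_congr (Equiv.refl _)
      have hgE : Fintype.card G'.E = Fintype.card {e : G.E // P e} :=
        Fintype.card_congr (Equiv.refl _)
      have hgen' : G'.genus = (g : ℤ) := by
        unfold Multigraph.genus at hgen ⊢
        rw [hgV, hgE]
        omega
      refine ih G' Γ A' g hg hgen' hfree' ?_
      omega
    · -- no leaves: direct bound
      push_neg at hleaf
      have hdeg2 : ∀ x : G.V, 2 ≤ G.deg x := by
        intro x
        have h1 := G.deg_pos hgenus2 x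
        have h2 := hleaf x
        omega
      obtain ⟨x₀, hx₀⟩ := G.exists_deg_ge_three hgenus2
      set k := (MulAction.orbit Γ x₀).toFinset.card with hk
      have hcount : k * G.deg x₀ + 2 * (Fintype.card G.V - k) ≤ 2 * Fintype.card G.E := by
        rw [← G.sum_deg, ← Finset.sum_add_sum_compl (MulAction.orbit Γ x₀).toFinset G.deg]
        have h1 : ∑ y ∈ (MulAction.orbit Γ x₀).toFinset, G.deg y = k * G.deg x₀ := by
          rw [Finset.sum_congr rfl (fun y hy => hdeg_orbit x₀ y (Set.mem_toFinset.1 hy)),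
            Finset.sum_const, smul_eq_mul]
        have h2 : 2 * (Fintype.card G.V - k) ≤
            ∑ y ∈ (MulAction.orbit Γ x₀).toFinsetᶜ, G.deg y := by
          have hc : (MulAction.orbit Γ x₀).toFinsetᶜ.card = Fintype.card G.V - k := by
            rw [Finset.card_compl]
          calc 2 * (Fintype.card G.V - k) = ∑ _y ∈ (MulAction.orbit Γ x₀).toFinsetᶜ, 2 := by
                rw [Finset.sum_const, smul_eq_mul, hc, mul_comm]
            _ ≤ ∑ y ∈ (MulAction.orbit Γ x₀).toFinsetᶜ, G.deg y :=
                Finset.sum_le_sum fun y _ => hdeg2 y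
        omega
      -- arithmetic
      have hkd : k * G.deg x₀ ≤ 2 * k + 2 * (g - 1) := by
        have := horb_card_le x₀
        omega
      have hk3 : k * 3 ≤ k * G.deg x₀ := Nat.mul_le_mul_left k hx₀
      have hkle : k ≤ 2 * (g - 1) := by omega
      have hfinal : Nat.card Γ ≤ k * G.deg x₀ := by
        rw [← horbstab x₀]
        exact Nat.mul_le_mul_left k (hstab_le x₀)
      omega

end MainBound

section ExampleGraph

/-- Sign of an element of `Multiplicative (ZMod 2)`. -/
def exSgn : Multiplicative (ZMod 2) → Bool := fun t => decide (Multiplicative.toAdd t = 1)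

lemma exSgn_mul : ∀ s t, exSgn (s * t) = xor (exSgn s) (exSgn t) := by decide

lemma exSgn_one : exSgn 1 = false := by decide

lemma exSgn_eq_false : ∀ t, exSgn t = false → t = 1 := by decide

variable (n : ℕ)

/-- The vertex type of the example graph. -/
abbrev exV := ZMod n ⊕ (ZMod n × Bool)

/-- The edge type of the example graph. -/
abbrev exE := ZMod n × Bool × Bool

/-- The group acting on the example graph. -/
abbrev exΓ := Multiplicative (ZMod 2) × DihedralGroup n

/-- The endpoints of edges in the example graph. -/
def exEnds : exE n → Sym2 (exV n) := fun e =>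
  if e.2.2 then s(Sum.inr (e.1, e.2.1), Sum.inl (e.1 + 1))
  else s(Sum.inl e.1, Sum.inr (e.1, e.2.1))

/-- Action of the group on vertices. -/
def exfV : exΓ n → exV n → exV n := fun γ v =>
  match γ.2, v with
  | .r a, .inl i => .inl (i - a)
  | .r a, .inr (i, b) => .inr (i - a, xor (exSgn γ.1) b)
  | .sr a, .inl i => .inl (a - i)
  | .sr a, .inr (i, b) => .inr (a - 1 - i, xor (exSgn γ.1) b)

/-- Action of the group on edges. -/
def exfE : exΓ n → exE n → exE n := fun γ e =>
  match γ.2 with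
  | .r a => (e.1 - a, xor (exSgn γ.1) e.2.1, e.2.2)
  | .sr a => (a - 1 - e.1, xor (exSgn γ.1) e.2.1, !e.2.2)

lemma exfV_one : ∀ v, exfV n 1 v = v := by
  intro v
  show exfV n (1, DihedralGroup.r 0) v = v
  rcases v with i | ⟨i, b⟩ <;> simp [exfV, exSgn_one]

lemma exfE_one : ∀ e, exfE n 1 e = e := by
  rintro ⟨i, b, s⟩
  show exfE n (1, DihedralGroup.r 0) _ = _
  simp [exfE, exSgn_one]

lemma exfV_mul : ∀ γ δ v, exfV n (γ * δ) v = exfV n γ (exfV n δ v) := by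
  rintro ⟨t₁, d₁⟩ ⟨t₂, d₂⟩ v
  rcases d₁ with a | a <;> rcases d₂ with b | b <;> rcases v with i | ⟨i, c⟩ <;>
    simp only [Prod.mk_mul_mk, DihedralGroup.r_mul_r, DihedralGroup.r_mul_sr,
      DihedralGroup.sr_mul_r, DihedralGroup.sr_mul_sr, exfV, exSgn_mul, Bool.xor_assoc,
      Sum.inl.injEq, Sum.inr.injEq, Prod.mk.injEq, and_true, true_and] <;>
    ring

lemma exfE_mul : ∀ γ δ e, exfE n (γ * δ) e = exfE n γ (exfE n δ e) := by
  rintro ⟨t₁, d₁⟩ ⟨t₂, d₂⟩ ⟨i, c, s⟩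
  rcases d₁ with a | a <;> rcases d₂ with b | b <;>
    simp only [Prod.mk_mul_mk, DihedralGroup.r_mul_r, DihedralGroup.r_mul_sr,
      DihedralGroup.sr_mul_r, DihedralGroup.sr_mul_sr, exfE, exSgn_mul, Bool.xor_assoc,
      Prod.mk.injEq, and_true, true_and, Bool.not_not] <;>
    first | ring | simp

end ExampleGraph

section ExampleGraph2

variable (n : ℕ) [NeZero n]

/-- The example graph: a cycle of `n` squares. -/
def exG : Multigraph where
  V := exV n
  E := exE n
  ends := exEnds n
  loopless := by
    rintro ⟨i, b, s⟩ h
    rcases s <;> simp [exEnds, Sym2.mk_isDiag_iff] at h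
  connected := by
    rw [SimpleGraph.connected_iff]
    refine ⟨?_, ⟨Sum.inl 0⟩⟩
    have hadj1 : ∀ (i : ZMod n) (b : Bool),
        (SimpleGraph.fromRel fun x y : exV n => ∃ e : exE n, exEnds n e = s(x, y)).Adj
          (Sum.inl i) (Sum.inr (i, b)) := by
      intro i b
      rw [SimpleGraph.fromRel_adj]
      exact ⟨by simp, Or.inl ⟨(i, b, false), by simp [exEnds]⟩⟩
    have hadj2 : ∀ (i : ZMod n) (b : Bool),
        (SimpleGraph.fromRel fun x y : exV n => ∃ e : exE n, exEnds n e = s(x, y)).Adj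
          (Sum.inr (i, b)) (Sum.inl (i + 1)) := by
      intro i b
      rw [SimpleGraph.fromRel_adj]
      exact ⟨by simp, Or.inl ⟨(i, b, true), by simp [exEnds]⟩⟩
    have hreach : ∀ k : ℕ,
        (SimpleGraph.fromRel fun x y : exV n => ∃ e : exE n, exEnds n e = s(x, y)).Reachable
          (Sum.inl 0) (Sum.inl (k : ZMod n)) := by
      intro k
      induction k with
      | zero =>
        rw [Nat.cast_zero]
      | succ k ihk =>
        refine ihk.trans (((hadj1 (k : ZMod n) false).reachable).trans ?_)
        have := (hadj2 (k : ZMod n) false).reachable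
        rwa [show ((k : ZMod n) + 1) = ((k + 1 : ℕ) : ZMod n) by push_cast; ring] at this
    have hreachV : ∀ v : exV n,
        (SimpleGraph.fromRel fun x y : exV n => ∃ e : exE n, exEnds n e = s(x, y)).Reachable
          (Sum.inl 0) v := by
      rintro (i | ⟨i, b⟩)
      · have := hreach i.val
        rwa [ZMod.natCast_rightInverse i] at this
      · have h1 := hreach i.val
        rw [ZMod.natCast_rightInverse i] at h1
        exact h1.trans (hadj1 i b).reachable
    intro u v
    exact (hreachV u).symm.trans (hreachV v)

/-- The harmonic action on the example graph. -/
def exA : GraphAction (exΓ n) (exG n) where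
  actV := MonoidHom.mk'
    (fun γ => ⟨exfV n γ, exfV n γ⁻¹,
      fun v => by have := exfV_mul n γ⁻¹ γ v; rw [inv_mul_cancel, exfV_one n v] at this; exact this.symm,
      fun v => by have := exfV_mul n γ γ⁻¹ v; rw [mul_inv_cancel, exfV_one n v] at this; exact this.symm⟩)
    (fun γ δ => Equiv.ext fun v => exfV_mul n γ δ v)
  actE := MonoidHom.mk'
    (fun γ => ⟨exfE n γ, exfE n γ⁻¹,
      fun e => by have := exfE_mul n γ⁻¹ γ e; rw [inv_mul_cancel, exfE_one n e] at this; exact this.symm,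
      fun e => by have := exfE_mul n γ γ⁻¹ e; rw [mul_inv_cancel, exfE_one n e] at this; exact this.symm⟩)
    (fun γ δ => Equiv.ext fun e => exfE_mul n γ δ e)
  ends_map := by
    rintro ⟨t, d⟩ ⟨i, b, s⟩
    show exEnds n (exfE n (t, d) (i, b, s)) = (exEnds n (i, b, s)).map (exfV n (t, d))
    rcases d with a | a <;> rcases s <;>
      simp only [exfE, exfV, exEnds, Bool.not_false, Bool.not_true, if_true, if_false,
        Bool.false_eq_true, Sym2.map_pair_eq, reduceIte]
    · rw [show i - a + 1 = i + 1 - a by ring]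
    · rw [show a - 1 - i + 1 = a - i by ring]
      exact Sym2.eq_swap
    · rw [show a - (i + 1) = a - 1 - i by ring]
      exact Sym2.eq_swap
  faithful := by
    rintro ⟨t, d⟩ hV hE
    rcases d with a | a
    · have h1 := hE (0, false, false)
      have h2 : exfE n (t, DihedralGroup.r a) (0, false, false) = (0, false, false) := h1
      simp only [exfE, Prod.mk.injEq] at h2
      have ha : a = 0 := by
        have := h2.1
        rwa [zero_sub, neg_eq_zero] at this
      have ht : t = 1 := exSgn_eq_false t (by simpa using h2.2.1)
      rw [ha, ht]
      rfl
    · have h1 := hE (0, false, false)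
      have h2 : exfE n (t, DihedralGroup.sr a) (0, false, false) = (0, false, false) := h1
      simp [exfE] at h2

lemma exA_freeStar : (exA n).FreeStar := by
  rintro ⟨t, d⟩ x e _ _ hE
  rcases d with a | a
  · obtain ⟨i, b, s⟩ := e
    have h2 : exfE n (t, DihedralGroup.r a) (i, b, s) = (i, b, s) := hE
    simp only [exfE, Prod.mk.injEq] at h2
    have ha : a = 0 := by
      have := h2.1
      rwa [sub_eq_self] at this
    have ht : t = 1 := exSgn_eq_false t (by
      rcases b <;> simpa using h2.2.1)
    rw [ha, ht]
    rfl
  · obtain ⟨i, b, s⟩ := e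
    have h2 : exfE n (t, DihedralGroup.sr a) (i, b, s) = (i, b, s) := hE
    simp only [exfE, Prod.mk.injEq] at h2
    rcases s <;> simp at h2

lemma exA_harmonic : (exA n).ActsHarmonically := by
  intro Δ
  refine ⟨(exA n).quotHarmonic_of_freeStar (exA_freeStar n) Δ, ?_⟩
  have hsort : ∀ (γ : exΓ n) (i : ZMod n), ∃ j, exfV n γ (Sum.inl i) = Sum.inl j := by
    rintro ⟨t, d⟩ i
    rcases d with a | a
    exacts [⟨i - a, rfl⟩, ⟨a - i, rfl⟩]
  have hsort2 : ∀ (γ : exΓ n) (p : ZMod n × Bool), ∃ q, exfV n γ (Sum.inr p) = Sum.inr q := by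
    rintro ⟨t, d⟩ ⟨i, b⟩
    rcases d with a | a
    exacts [⟨_, rfl⟩, ⟨_, rfl⟩]
  rintro (i | ⟨i, b⟩)
  · refine ⟨(i, false, false), ?_, Sum.inr (i, false), ?_, ?_⟩
    · show Sum.inl i ∈ exEnds n (i, false, false)
      simp [exEnds]
    · show Sum.inr (i, false) ∈ exEnds n (i, false, false)
      simp [exEnds]
    · rintro ⟨δ, _, hδ⟩
      obtain ⟨j, hj⟩ := hsort δ i
      rw [show (exA n).actV δ (Sum.inl i) = exfV n δ (Sum.inl i) from rfl, hj] at hδ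
      exact Sum.inl_ne_inr hδ
  · refine ⟨(i, b, false), ?_, Sum.inl i, ?_, ?_⟩
    · show Sum.inr (i, b) ∈ exEnds n (i, b, false)
      simp [exEnds]
    · show Sum.inl i ∈ exEnds n (i, b, false)
      simp [exEnds]
    · rintro ⟨δ, _, hδ⟩
      obtain ⟨q, hq⟩ := hsort2 δ (i, b)
      rw [show (exA n).actV δ (Sum.inr (i, b)) = exfV n δ (Sum.inr (i, b)) from rfl, hq] at hδ
      exact Sum.inr_ne_inl hδ

lemma exG_genus : (exG n).genus = (n : ℤ) + 1 := by
  unfold Multigraph.genus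
  have hV : Fintype.card (exG n).V = n + n * 2 := by
    show Fintype.card (exV n) = n + n * 2
    simp [ZMod.card]
  have hE : Fintype.card (exG n).E = n * 2 * 2 := by
    show Fintype.card (exE n) = n * 2 * 2
    simp [ZMod.card, mul_assoc]
  rw [hV, hE]
  push_cast
  ring

lemma exΓ_card : Nat.card (exΓ n) = 4 * n := by
  rw [Nat.card_eq_fintype_card, Fintype.card_prod, DihedralGroup.card]
  have : Fintype.card (Multiplicative (ZMod 2)) = 2 := by
    rw [Fintype.card_multiplicative, ZMod.card]
  rw [this]
  ring

end ExampleGraph2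


/-- For every `g ≥ 3` the group `ℤ/2ℤ × D_{g−1}` of order `4(g − 1)`
acts harmonically on some graph of genus `g`; consequently `M(g) ≥ 4(g − 1)` for all
`g ≥ 2`. -/
theorem lower_bound :
    (∀ g : ℕ, 3 ≤ g →
      ∃ (G : Multigraph)
        (A : GraphAction (Multiplicative (ZMod 2) × DihedralGroup (g - 1)) G),
        A.ActsHarmonically ∧ G.genus = (g : ℤ)) ∧
    (∀ g : ℕ, 2 ≤ g → 4 * (g - 1) ≤ M g) := by
  constructor
  · intro g hg
    haveI : NeZero (g - 1) := ⟨by omega⟩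
    refine ⟨exG (g - 1), exA (g - 1), exA_harmonic (g - 1), ?_⟩
    rw [exG_genus]
    omega
  · intro g hg
    haveI : NeZero (g - 1) := ⟨by omega⟩
    have hmem : 4 * (g - 1) ∈ {n : ℕ | ∃ (Γ : Type) (i : Group Γ) (G : Multigraph)
        (A : @GraphAction Γ i G), @GraphAction.ActsHarmonically Γ i G A ∧
        G.genus = (g : ℤ) ∧ Nat.card Γ = n} := by
      refine ⟨exΓ (g - 1), inferInstance, exG (g - 1), exA (g - 1),
        exA_harmonic (g - 1), ?_, exΓ_card (g - 1)⟩
      rw [exG_genus]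
      omega
    have hbdd : BddAbove {n : ℕ | ∃ (Γ : Type) (i : Group Γ) (G : Multigraph)
        (A : @GraphAction Γ i G), @GraphAction.ActsHarmonically Γ i G A ∧
        G.genus = (g : ℤ) ∧ Nat.card Γ = n} := by
      refine ⟨6 * (g - 1), ?_⟩
      rintro m ⟨Γ, i, G, A, hharm, hgen, rfl⟩
      letI := i
      exact main_bound (Fintype.card G.V) G Γ A g hg hgen
        (A.freeStar_of_actsHarmonically hharm) le_rfl
    exact le_csSup hbdd hmem
end

section
/- Suppose a group Γ acts harmonically on a graph G of genus g ≥ 2. If p is a prime factor of |Γ|, then p ≤ g + 1; in particular, p divides (g + 1)!. -/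
open scoped Classical

private lemma perm_zpow_neg_apply {α : Type*} (π : Equiv.Perm α) (k : ℤ) (u : α) :
    (π ^ (-k)) ((π ^ k) u) = u := by
  rw [← Equiv.Perm.mul_apply, ← zpow_add, neg_add_cancel, zpow_zero, Equiv.Perm.one_apply]

private lemma perm_zpow_comm_apply {α : Type*} (π : Equiv.Perm α) (k m : ℤ) (u : α) :
    (π ^ k) ((π ^ m) u) = (π ^ m) ((π ^ k) u) := by
  rw [← Equiv.Perm.mul_apply, ← Equiv.Perm.mul_apply, ← zpow_add, ← zpow_add, add_comm]

private lemma perm_fix_zpow {α : Type*} (π : Equiv.Perm α) {x : α} (h : π x = x) :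
    ∀ k : ℤ, (π ^ k) x = x := by
  have hn : ∀ n : ℕ, (π ^ n) x = x := by
    intro n
    induction n with
    | zero => simp
    | succ n ih => rw [pow_succ, Equiv.Perm.mul_apply, h, ih]
  intro k
  induction k using Int.rec with
  | ofNat n => simpa using hn n
  | negSucc n =>
      have : (π ^ (n + 1 : ℕ))⁻¹ x = x :=
        (Equiv.Perm.inv_eq_iff_eq).mpr (hn (n + 1)).symm
      simpa [zpow_negSucc] using this

private lemma orbit_card_of_fix {α : Type*} (π : Equiv.Perm α) {x : α} (h : π x = x) :
    Nat.card {y : α // ∃ k : ℤ, (π ^ k) x = y} = 1 := by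
  haveI : Unique {y : α // ∃ k : ℤ, (π ^ k) x = y} := by
    refine ⟨⟨⟨x, ⟨0, by simp⟩⟩⟩, ?_⟩
    rintro ⟨y, k, rfl⟩
    exact Subtype.ext (perm_fix_zpow π h k)
  exact Nat.card_unique

private lemma orbit_card_of_not_fix {α : Type*} [Fintype α] {p : ℕ} (hp : p.Prime)
    (π : Equiv.Perm α) (hπ : π ^ p = 1) {x : α} (hx : π x ≠ x) :
    Nat.card {y : α // ∃ k : ℤ, (π ^ k) x = y} = p := by
  haveI : NeZero p := ⟨hp.pos.ne'⟩
  have hπz : π ^ (p : ℤ) = 1 := by rw [zpow_natCast, hπ]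
  -- any integer power equals the power by (k % p).toNat
  have hmod : ∀ k : ℤ, π ^ k = π ^ ((k % (p : ℤ)).toNat) := by
    intro k
    have h0 : (0 : ℤ) ≤ k % (p : ℤ) := Int.emod_nonneg k (by exact_mod_cast hp.pos.ne')
    have : π ^ k = π ^ (k % (p : ℤ) + (p : ℤ) * (k / (p : ℤ))) := by
      rw [Int.emod_add_mul_ediv k (p : ℤ)]
    rw [this, zpow_add, zpow_mul, hπz, one_zpow, mul_one, ← zpow_natCast π,
      Int.toNat_of_nonneg h0]
  -- fixed by π^d with 0 < d < p implies fixed by π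
  have key : ∀ d : ℕ, 0 < d → d < p → (π ^ d) x = x → False := by
    intro d hd0 hdp hfix
    have hcop : Nat.Coprime p d := (hp.coprime_iff_not_dvd).mpr
      (fun hdvd => absurd (Nat.le_of_dvd hd0 hdvd) (not_le.mpr hdp))
    have hbez : (1 : ℤ) = p * Nat.gcdA p d + d * Nat.gcdB p d := by
      have := Nat.gcd_eq_gcd_ab p d
      rwa [hcop] at this
    have : (π ^ (1 : ℤ)) x = x := by
      rw [hbez, zpow_add, Equiv.Perm.mul_apply]
      have e1 : (π ^ ((d : ℤ) * Nat.gcdB p d)) x = x := by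
        rw [zpow_mul]
        exact perm_fix_zpow _ (by rw [zpow_natCast]; exact hfix) _
      rw [e1, zpow_mul, hπz, one_zpow, Equiv.Perm.one_apply]
    rw [zpow_one] at this
    exact hx this
  let f : ZMod p → {y : α // ∃ k : ℤ, (π ^ k) x = y} :=
    fun k => ⟨(π ^ (k.val)) x, ⟨(k.val : ℤ), by rw [zpow_natCast]⟩⟩
  have hinj : Function.Injective f := by
    intro i j hij
    have h1 : (π ^ i.val) x = (π ^ j.val) x := congrArg Subtype.val hij
    -- wlog i.val ≤ j.val
    rcases le_total i.val j.val with hle | hle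
    · have h2 : (π ^ (j.val - i.val)) ((π ^ i.val) x) = (π ^ i.val) x := by
        rw [← Equiv.Perm.mul_apply, ← pow_add, Nat.sub_add_cancel hle, h1]
      have h3 : (π ^ (j.val - i.val)) x = x := by
        apply Equiv.injective (π ^ i.val)
        rw [← Equiv.Perm.mul_apply, ← pow_add, Nat.add_comm, pow_add,
          Equiv.Perm.mul_apply, h2]
      rcases Nat.eq_zero_or_pos (j.val - i.val) with h0 | h0
      · have : i.val = j.val := by omega
        exact ZMod.val_injective p this
      · exact absurd h3 (fun hh => key _ h0 (by have := ZMod.val_lt j; omega) hh)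
    · have h2 : (π ^ (i.val - j.val)) ((π ^ j.val) x) = (π ^ j.val) x := by
        rw [← Equiv.Perm.mul_apply, ← pow_add, Nat.sub_add_cancel hle, h1]
      have h3 : (π ^ (i.val - j.val)) x = x := by
        apply Equiv.injective (π ^ j.val)
        rw [← Equiv.Perm.mul_apply, ← pow_add, Nat.add_comm, pow_add,
          Equiv.Perm.mul_apply, h2]
      rcases Nat.eq_zero_or_pos (i.val - j.val) with h0 | h0
      · have : i.val = j.val := by omega
        exact ZMod.val_injective p this
      · exact absurd h3 (fun hh => key _ h0 (by have := ZMod.val_lt i; omega) hh)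
  have hsurj : Function.Surjective f := by
    rintro ⟨y, k, rfl⟩
    refine ⟨(((k % (p : ℤ)).toNat : ℕ) : ZMod p), Subtype.ext ?_⟩
    have hlt : (k % (p : ℤ)).toNat < p := by
      have h1 : k % (p : ℤ) < (p : ℤ) := Int.emod_lt_of_pos k (by exact_mod_cast hp.pos)
      have h0 : (0 : ℤ) ≤ k % (p : ℤ) := Int.emod_nonneg k (by exact_mod_cast hp.pos.ne')
      omega
    show (π ^ ((((k % (p:ℤ)).toNat : ℕ) : ZMod p)).val) x = (π ^ k) x
    rw [ZMod.val_cast_of_lt hlt, hmod k]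
  rw [Nat.card_congr (Equiv.ofBijective f ⟨hinj, hsurj⟩).symm, Nat.card_zmod]

private lemma card_le_of_connected {α β : Type*} [Fintype α] [Fintype β] (f : β → Sym2 α)
    (h : (SimpleGraph.fromRel fun x y => ∃ e, f e = s(x, y)).Connected) :
    Fintype.card α ≤ Fintype.card β + 1 := by
  set Q := SimpleGraph.fromRel fun x y : α => ∃ e, f e = s(x, y) with hQ
  haveI hne : Nonempty α := h.nonempty
  obtain ⟨r⟩ := hne
  have key : ∀ v : α, v ≠ r → ∃ e : β, ∃ u : α, f e = s(v, u) ∧ Q.dist r u < Q.dist r v := by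
    intro v hv
    have hreach : Q.Reachable r v := h.preconnected r v
    obtain ⟨w, hw⟩ := hreach.exists_walk_length_eq_dist
    have hpos : 0 < Q.dist r v := hreach.pos_dist_of_ne (Ne.symm hv)
    set wr := w.reverse with hwr
    have hlen : wr.length = Q.dist r v := by rw [hwr, SimpleGraph.Walk.length_reverse, hw]
    cases hcase : wr with
    | nil => rw [hcase] at hlen; simp at hlen hpos
    | @cons _ u _ hadj w'' =>
        have hdistu : Q.dist r u < Q.dist r v := by
          have h1 : Q.dist u r ≤ w''.length := SimpleGraph.dist_le w''
          have h2 : w''.length + 1 = Q.dist r v := by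
            rw [← hlen, hcase]; simp
          rw [SimpleGraph.dist_comm] at h1
          omega
        rw [hQ, SimpleGraph.fromRel_adj] at hadj
        obtain ⟨hne', he | he⟩ := hadj
        · obtain ⟨e, hfe⟩ := he
          exact ⟨e, u, hfe, hdistu⟩
        · obtain ⟨e, hfe⟩ := he
          exact ⟨e, u, by rw [hfe, Sym2.eq_swap], hdistu⟩
  choose ef uf hfu hdist using key
  let F : {v : α // v ≠ r} → β := fun v => ef v.1 v.2
  have hinj : Function.Injective F := by
    rintro ⟨v, hv⟩ ⟨v', hv'⟩ hF
    have h1 : f (ef v hv) = s(v, uf v hv) := hfu v hv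
    have h2 : f (ef v' hv') = s(v', uf v' hv') := hfu v' hv'
    have hFe : ef v hv = ef v' hv' := hF
    rw [hFe, h2] at h1
    rw [Sym2.eq_iff] at h1
    rcases h1 with ⟨h1, _⟩ | ⟨h1, h2'⟩
    · exact Subtype.ext h1.symm
    · exfalso
      have d1 := hdist v hv
      have d2 := hdist v' hv'
      rw [← h1] at d1
      rw [h2'] at d2
      omega
  have hcard : Fintype.card {v : α // v ≠ r} ≤ Fintype.card β :=
    Fintype.card_le_of_injective F hinj
  have : Fintype.card α = Fintype.card {v : α // v = r} + Fintype.card {v : α // ¬ v = r} := by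
    rw [← Fintype.card_sum]
    exact (Fintype.card_congr (Equiv.sumCompl (fun v : α => v = r))).symm
  rw [Fintype.card_subtype_eq] at this
  have heq : Fintype.card {v : α // ¬ v = r} = Fintype.card {v : α // v ≠ r} := rfl
  omega


private lemma arith_final (p g b a cv ch E V : ℤ) (hp3 : 3 ≤ p) (hg2 : 2 ≤ g)
    (hb0 : 0 ≤ b) (ha0 : 0 ≤ a) (hcv0 : 0 ≤ cv)
    (hgenus : E - V + 1 = g) (hV : V = b + a * p) (hE : E = (cv + ch) * p)
    (hconn : b + a ≤ ch + 1) : p ≤ g + 1 := by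
  have ht : p * (cv + ch - a) = g - 1 + b := by linear_combination hgenus - hE + hV
  by_cases hb1 : b ≤ 1
  · have ht1 : 1 ≤ cv + ch - a := by nlinarith [ht, hg2, hb0, hp3]
    nlinarith [ht, ht1, hb1, hp3, hg2]
  · push_neg at hb1
    have hb2 : (2 : ℤ) ≤ b := hb1
    nlinarith [hgenus, hV, hE,
      mul_nonneg (by linarith : (0:ℤ) ≤ b - 2) (by linarith : (0:ℤ) ≤ p - 1),
      mul_nonneg hcv0 (by linarith : (0:ℤ) ≤ p),
      mul_nonneg (by linarith : (0:ℤ) ≤ ch + 1 - b - a) (by linarith : (0:ℤ) ≤ p)]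

private lemma main_bound_s14 {Γ : Type} [Group Γ] {G : Multigraph} (A : GraphAction Γ G)
    (hA : A.ActsHarmonically) {p : ℕ} (hp : p.Prime) (hodd : Odd p)
    (γ : Γ) (hγ : orderOf γ = p) (g : ℕ) (hg : G.genus = (g : ℤ)) (h2 : 2 ≤ g) :
    p ≤ g + 1 := by
  classical
  set σ := A.actV γ with hσdef
  set τ := A.actE γ with hτdef
  set Δ := Subgroup.zpowers γ with hΔdef
  have hp3 : 3 ≤ p := by
    obtain ⟨m, hm⟩ := hodd; have := hp.two_le; omega
  have hσp : σ ^ p = 1 := by rw [hσdef, ← map_pow, ← hγ, pow_orderOf_eq_one, map_one]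
  have hτp : τ ^ p = 1 := by rw [hτdef, ← map_pow, ← hγ, pow_orderOf_eq_one, map_one]
  have hactV : ∀ k : ℤ, A.actV (γ ^ k) = σ ^ k := fun k => map_zpow A.actV γ k
  have hactE : ∀ k : ℤ, A.actE (γ ^ k) = τ ^ k := fun k => map_zpow A.actE γ k
  have hends : ∀ (k : ℤ) (e : G.E), G.ends ((τ ^ k) e) = (G.ends e).map (σ ^ k) := by
    intro k e
    rw [← hactE k, ← hactV k]
    exact A.ends_map _ e
  have hvrel : ∀ x y : G.V, A.vrel Δ x y ↔ ∃ k : ℤ, (σ ^ k) x = y := by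
    intro x y
    constructor
    · rintro ⟨δ, hδ, hh⟩
      rw [hΔdef, Subgroup.mem_zpowers_iff] at hδ
      obtain ⟨k, rfl⟩ := hδ
      exact ⟨k, by rw [← hactV k]; exact hh⟩
    · rintro ⟨k, hk⟩
      exact ⟨γ ^ k, Subgroup.zpow_mem _ (Subgroup.mem_zpowers γ) k, by rw [hactV k]; exact hk⟩
  have herel : ∀ e f : G.E, A.erel Δ e f ↔ ∃ k : ℤ, (τ ^ k) e = f := by
    intro e f
    constructor
    · rintro ⟨δ, hδ, hh⟩
      rw [hΔdef, Subgroup.mem_zpowers_iff] at hδ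
      obtain ⟨k, rfl⟩ := hδ
      exact ⟨k, by rw [← hactE k]; exact hh⟩
    · rintro ⟨k, hk⟩
      exact ⟨γ ^ k, Subgroup.zpow_mem _ (Subgroup.mem_zpowers γ) k, by rw [hactE k]; exact hk⟩
  have hmem : ∀ (k : ℤ) (e : G.E) (x : G.V), x ∈ G.ends e → ((σ ^ k) x) ∈ G.ends ((τ ^ k) e) := by
    intro k e x hx
    rw [hends k e, Sym2.mem_map]
    exact ⟨x, hx, rfl⟩
  -- verticality is invariant
  have hVfwd : ∀ (k : ℤ) (e : G.E), A.Vertical Δ e → A.Vertical Δ ((τ ^ k) e) := by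
    rintro k e ⟨x, y, hxy, hrel⟩
    refine ⟨(σ ^ k) x, (σ ^ k) y, by rw [hends k e, hxy, Sym2.map_pair_eq], ?_⟩
    obtain ⟨m, hm⟩ := (hvrel x y).mp hrel
    refine (hvrel _ _).mpr ⟨m, ?_⟩
    rw [perm_zpow_comm_apply, hm]
  have hVert : ∀ (k : ℤ) (e : G.E), A.Vertical Δ ((τ ^ k) e) ↔ A.Vertical Δ e := by
    intro k e
    refine ⟨fun h => ?_, hVfwd k e⟩
    have := hVfwd (-k) _ h
    rwa [perm_zpow_neg_apply] at this
  -- no vertical edges at fixed vertices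
  have hNoVertAt : ∀ x : G.V, σ x = x → ∀ f, x ∈ G.ends f → ¬ A.Vertical Δ f := by
    rintro x hx f hxf ⟨u, v, huv, hrel⟩
    have hne : u ≠ v := by
      have := G.loopless f
      rw [huv, Sym2.mk_isDiag_iff] at this
      exact this
    rw [huv, Sym2.mem_iff] at hxf
    obtain ⟨k, hk⟩ := (hvrel u v).mp hrel
    rcases hxf with rfl | rfl
    · rw [perm_fix_zpow σ hx k] at hk
      exact hne hk
    · apply hne
      have h1 : (σ ^ (-k)) ((σ ^ k) u) = (σ ^ (-k)) x := by rw [hk]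
      rwa [perm_zpow_neg_apply, perm_fix_zpow σ hx] at h1
  -- endpoints of fixed edges are fixed
  have hend : ∀ e, τ e = e → ∀ x, x ∈ G.ends e → σ x = x := by
    intro e he x hx
    obtain ⟨u, v, huv⟩ : ∃ u v, G.ends e = s(u, v) := by
      induction G.ends e using Sym2.ind with | _ u v => exact ⟨u, v, rfl⟩
    have hne : u ≠ v := by
      have := G.loopless e
      rw [huv, Sym2.mk_isDiag_iff] at this
      exact this
    have hmapeq : s(σ u, σ v) = s(u, v) := by
      have h1 := A.ends_map γ e
      rw [he, huv, Sym2.map_pair_eq] at h1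
      exact h1.symm
    rw [Sym2.eq_iff] at hmapeq
    rcases hmapeq with ⟨h1, h2⟩ | ⟨h1, h2⟩
    · rw [huv, Sym2.mem_iff] at hx
      rcases hx with rfl | rfl <;> assumption
    · exfalso
      obtain ⟨m, hm⟩ := hodd
      have hσ2 : (σ ^ 2) v = v := by
        rw [sq, Equiv.Perm.mul_apply, h2, h1]
      have h2m : ∀ n : ℕ, (σ ^ (2 * n)) v = v := by
        intro n
        induction n with
        | zero => simp
        | succ n ih =>
            rw [show 2 * (n + 1) = 2 * n + 2 by ring, pow_add, Equiv.Perm.mul_apply, hσ2, ih]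
      have hpv : (σ ^ p) v = u := by
        rw [hm, pow_succ', Equiv.Perm.mul_apply, h2m m, h2]
      rw [hσp] at hpv
      exact hne (by simpa using hpv.symm)
  -- at a fixed vertex with a fixed edge, all incident edges are fixed
  have hstar : ∀ x, σ x = x → ∀ e₀, x ∈ G.ends e₀ → τ e₀ = e₀ →
      ∀ f, x ∈ G.ends f → τ f = f := by
    intro x hx e₀ hxe₀ he₀ f hxf
    by_contra hf
    have hnv₀ : ¬ A.Vertical Δ e₀ := hNoVertAt x hx e₀ hxe₀
    have hnvf : ¬ A.Vertical Δ f := hNoVertAt x hx f hxf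
    have hvxx : A.vrel Δ x x := (hvrel x x).mpr ⟨0, by simp⟩
    have hcount := (hA Δ).1 x e₀ f hnv₀ hnvf ⟨x, hxe₀, hvxx⟩ ⟨x, hxf, hvxx⟩
    have hc1 : Nat.card {e : G.E // x ∈ G.ends e ∧ A.erel Δ e e₀} = 1 := by
      haveI : Unique {e : G.E // x ∈ G.ends e ∧ A.erel Δ e e₀} := by
        refine ⟨⟨⟨e₀, hxe₀, (herel _ _).mpr ⟨0, by simp⟩⟩⟩, ?_⟩
        rintro ⟨f', hxf', hrelf'⟩
        apply Subtype.ext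
        obtain ⟨k, hk⟩ := (herel _ _).mp hrelf'
        have h1 : f' = (τ ^ (-k)) e₀ := by rw [← hk, perm_zpow_neg_apply]
        show f' = e₀
        rw [h1, perm_fix_zpow τ he₀]
      exact Nat.card_unique
    have hcp : Nat.card {e : G.E // x ∈ G.ends e ∧ A.erel Δ e f} = p := by
      have hequiv : {e : G.E // x ∈ G.ends e ∧ A.erel Δ e f} ≃
          {e : G.E // ∃ k : ℤ, (τ ^ k) f = e} := by
        apply Equiv.subtypeEquivRight
        intro e'
        constructor
        · rintro ⟨_, hrel⟩
          obtain ⟨k, hk⟩ := (herel _ _).mp hrel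
          exact ⟨-k, by rw [← hk, perm_zpow_neg_apply]⟩
        · rintro ⟨k, rfl⟩
          refine ⟨?_, (herel _ _).mpr ⟨-k, perm_zpow_neg_apply τ k f⟩⟩
          have := hmem k f x hxf
          rwa [perm_fix_zpow σ hx] at this
      rw [Nat.card_congr hequiv]
      exact orbit_card_of_not_fix hp τ hτp hf
    rw [hc1, hcp] at hcount
    exact hp.one_lt.ne hcount
  -- no fixed edges at all
  have hNF : ∀ e, τ e ≠ e := by
    intro e₀ he₀
    obtain ⟨u, v, huv⟩ : ∃ u v, G.ends e₀ = s(u, v) := by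
      induction G.ends e₀ using Sym2.ind with | _ u v => exact ⟨u, v, rfl⟩
    have hue : u ∈ G.ends e₀ := by rw [huv]; exact Sym2.mem_mk_left u v
    have hgu : σ u = u ∧ ∃ e, u ∈ G.ends e ∧ τ e = e :=
      ⟨hend e₀ he₀ u hue, ⟨e₀, hue, he₀⟩⟩
    have hprop : ∀ x y : G.V, (σ x = x ∧ ∃ e, x ∈ G.ends e ∧ τ e = e) →
        (SimpleGraph.fromRel fun a b : G.V => ∃ e, G.ends e = s(a, b)).Adj x y →
        (σ y = y ∧ ∃ e, y ∈ G.ends e ∧ τ e = e) := by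
      intro x y hgx hadj
      rw [SimpleGraph.fromRel_adj] at hadj
      obtain ⟨hne, hee⟩ := hadj
      have hee' : ∃ e, G.ends e = s(x, y) := by
        rcases hee with he | he
        · exact he
        · obtain ⟨e, he⟩ := he
          exact ⟨e, by rw [he, Sym2.eq_swap]⟩
      obtain ⟨e, hE0⟩ := hee'
      have hxe : x ∈ G.ends e := by rw [hE0]; exact Sym2.mem_mk_left x y
      have hye : y ∈ G.ends e := by rw [hE0]; exact Sym2.mem_mk_right x y
      obtain ⟨hxfix, e', hxe', he'⟩ := hgx
      have hef : τ e = e := hstar x hxfix e' hxe' he' e hxe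
      exact ⟨hend e hef y hye, ⟨e, hye, hef⟩⟩
    have hall : ∀ y, σ y = y ∧ ∃ e, y ∈ G.ends e ∧ τ e = e := by
      have hstep : ∀ (x z : G.V)
          (_ : (SimpleGraph.fromRel fun a b : G.V => ∃ e, G.ends e = s(a, b)).Walk x z),
          (σ x = x ∧ ∃ e, x ∈ G.ends e ∧ τ e = e) →
          (σ z = z ∧ ∃ e, z ∈ G.ends e ∧ τ e = e) := by
        intro x z w
        induction w with
        | nil => exact id
        | cons h w ih => exact fun hx => ih (hprop _ _ hx h)
      intro y
      obtain ⟨w⟩ := G.connected.preconnected u y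
      exact hstep u y w hgu
    have hγ1 : γ = 1 := by
      apply A.faithful γ
      · intro x
        exact (hall x).1
      · intro f
        obtain ⟨u', v', hu'v'⟩ : ∃ u' v', G.ends f = s(u', v') := by
          induction G.ends f using Sym2.ind with | _ u' v' => exact ⟨u', v', rfl⟩
        have hu'f : u' ∈ G.ends f := by rw [hu'v']; exact Sym2.mem_mk_left u' v'
        obtain ⟨hfix, e', he'1, he'2⟩ := hall u'
        exact hstar u' hfix e' he'1 he'2 f hu'f
    rw [hγ1, orderOf_one] at hγ
    exact hp.one_lt.ne hγ
  -- ==================== counting ====================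
  letI sV : Setoid G.V := A.vSetoid Δ
  letI sE : Setoid G.E := A.eSetoid Δ
  have hfibV : ∀ y : Quotient sV, Fintype.card {x : G.V // Quotient.mk sV x = y} = 1 ∨
      Fintype.card {x : G.V // Quotient.mk sV x = y} = p := by
    intro y
    have hiff : ∀ x : G.V, Quotient.mk sV x = y ↔ ∃ k : ℤ, (σ ^ k) y.out = x := by
      intro x
      constructor
      · intro h
        have hr : A.vrel Δ x y.out := by
          apply Quotient.exact (s := sV)
          rw [h, Quotient.out_eq]
        obtain ⟨k, hk⟩ := (hvrel _ _).mp hr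
        refine ⟨-k, ?_⟩
        have := perm_zpow_neg_apply σ k x
        rwa [hk] at this
      · rintro ⟨k, hk⟩
        have hr : A.vrel Δ x y.out := (hvrel _ _).mpr
          ⟨-k, by rw [← hk]; exact perm_zpow_neg_apply σ k y.out⟩
        calc Quotient.mk sV x = Quotient.mk sV y.out := Quotient.sound hr
          _ = y := Quotient.out_eq y
    rw [Fintype.card_congr (Equiv.subtypeEquivRight hiff), ← Nat.card_eq_fintype_card]
    by_cases hfix : σ y.out = y.out
    · left; exact orbit_card_of_fix σ hfix
    · right; exact orbit_card_of_not_fix hp σ hσp hfix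
  have hfibE : ∀ q : Quotient sE, Fintype.card {e : G.E // Quotient.mk sE e = q} = p := by
    intro q
    have hiff : ∀ e : G.E, Quotient.mk sE e = q ↔ ∃ k : ℤ, (τ ^ k) q.out = e := by
      intro e
      constructor
      · intro h
        have hr : A.erel Δ e q.out := by
          apply Quotient.exact (s := sE)
          rw [h, Quotient.out_eq]
        obtain ⟨k, hk⟩ := (herel _ _).mp hr
        refine ⟨-k, ?_⟩
        have := perm_zpow_neg_apply τ k e
        rwa [hk] at this
      · rintro ⟨k, hk⟩
        have hr : A.erel Δ e q.out := (herel _ _).mpr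
          ⟨-k, by rw [← hk]; exact perm_zpow_neg_apply τ k q.out⟩
        calc Quotient.mk sE e = Quotient.mk sE q.out := Quotient.sound hr
          _ = q := Quotient.out_eq q
    rw [Fintype.card_congr (Equiv.subtypeEquivRight hiff), ← Nat.card_eq_fintype_card]
    exact orbit_card_of_not_fix hp τ hτp (hNF q.out)
  have hcardV : Fintype.card G.V =
      ∑ y : Quotient sV, Fintype.card {x : G.V // Quotient.mk sV x = y} := by
    rw [← Fintype.card_sigma]
    exact (Fintype.card_congr (Equiv.sigmaFiberEquiv (Quotient.mk sV))).symm
  have hcardE : Fintype.card G.E =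
      ∑ q : Quotient sE, Fintype.card {e : G.E // Quotient.mk sE e = q} := by
    rw [← Fintype.card_sigma]
    exact (Fintype.card_congr (Equiv.sigmaFiberEquiv (Quotient.mk sE))).symm
  set b := (Finset.univ.filter fun y : Quotient sV =>
      Fintype.card {x : G.V // Quotient.mk sV x = y} = 1).card with hbdef
  set a := (Finset.univ.filter fun y : Quotient sV =>
      ¬ Fintype.card {x : G.V // Quotient.mk sV x = y} = 1).card with hadef
  have hVab : Fintype.card G.V = b + a * p := by
    rw [hcardV, ← Finset.sum_filter_add_sum_filter_not Finset.univ
      (fun y : Quotient sV => Fintype.card {x : G.V // Quotient.mk sV x = y} = 1)]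
    congr 1
    · rw [Finset.sum_congr rfl (fun y hy => (Finset.mem_filter.mp hy).2), Finset.sum_const,
        smul_eq_mul, mul_one, hbdef]
    · rw [Finset.sum_congr rfl (fun y hy => ?_), Finset.sum_const, smul_eq_mul, hadef]
      rcases hfibV y with h1 | h1
      · exact absurd h1 (Finset.mem_filter.mp hy).2
      · exact h1
  have hQVab : Fintype.card (Quotient sV) = b + a := by
    rw [hbdef, hadef, Finset.card_filter_add_card_filter_not, Finset.card_univ]
  have hEq : Fintype.card G.E = Fintype.card (Quotient sE) * p := by
    rw [hcardE, Finset.sum_congr rfl (fun q _ => hfibE q), Finset.sum_const, smul_eq_mul,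
      Finset.card_univ]
  set cv := Fintype.card {q : Quotient sE // A.Vertical Δ q.out} with hcvdef
  set ch := Fintype.card {q : Quotient sE // ¬ A.Vertical Δ q.out} with hchdef
  have hQE : Fintype.card (Quotient sE) = cv + ch := by
    rw [hcvdef, hchdef, Fintype.card_subtype, Fintype.card_subtype,
      Finset.card_filter_add_card_filter_not, Finset.card_univ]
  -- connectivity bound
  have hconn : Fintype.card (Quotient sV) ≤ ch + 1 := by
    apply card_le_of_connected
      (f := fun q : {q : Quotient sE // ¬ A.Vertical Δ q.out} =>
        Sym2.map (Quotient.mk sV) (G.ends q.1.out))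
    rw [SimpleGraph.connected_iff]
    constructor
    · intro q r
      refine Quotient.inductionOn₂ q r ?_
      intro x y
      obtain ⟨w⟩ := G.connected.preconnected x y
      have hstep : ∀ (x' z' : G.V)
          (_ : (SimpleGraph.fromRel fun a b : G.V => ∃ e, G.ends e = s(a, b)).Walk x' z'),
          (SimpleGraph.fromRel fun y' z'' : Quotient sV =>
            ∃ bb : {q : Quotient sE // ¬ A.Vertical Δ q.out},
              Sym2.map (Quotient.mk sV) (G.ends bb.1.out) = s(y', z'')).Reachable
            (Quotient.mk sV x') (Quotient.mk sV z') := by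
        intro x' z' w'
        induction w' with
        | nil => exact SimpleGraph.Reachable.refl _
        | @cons aa bb cc hab w'' ih =>
            rw [SimpleGraph.fromRel_adj] at hab
            obtain ⟨hne, hee⟩ := hab
            have hee' : ∃ e, G.ends e = s(aa, bb) := by
              rcases hee with he | he
              · exact he
              · obtain ⟨e, he⟩ := he
                exact ⟨e, by rw [he, Sym2.eq_swap]⟩
            obtain ⟨e, hE0⟩ := hee'
            by_cases hq : (Quotient.mk sV aa : Quotient sV) = Quotient.mk sV bb
            · rw [hq]; exact ih
            · refine (SimpleGraph.Adj.reachable ?_).trans ih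
              rw [SimpleGraph.fromRel_adj]
              refine ⟨hq, Or.inl ?_⟩
              have hnv : ¬ A.Vertical Δ e := by
                rintro ⟨u', v', hu'v', hrel⟩
                rw [hE0] at hu'v'
                rw [Sym2.eq_iff] at hu'v'
                apply hq
                rcases hu'v' with ⟨h1, h2⟩ | ⟨h1, h2⟩
                · subst h1; subst h2
                  exact Quotient.sound hrel
                · subst h1; subst h2
                  exact (Quotient.sound hrel).symm
              have hout : ∃ k : ℤ, (τ ^ k) e = (Quotient.mk sE e).out := by
                have h := Quotient.mk_out (s := sE) e
                obtain ⟨k, hk⟩ := (herel _ _).mp h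
                refine ⟨-k, ?_⟩
                have h2 := perm_zpow_neg_apply τ k (Quotient.mk sE e).out
                rwa [hk] at h2
              obtain ⟨k, hk⟩ := hout
              have hnvout : ¬ A.Vertical Δ (Quotient.mk sE e).out := by
                rw [← hk, hVert]; exact hnv
              refine ⟨⟨Quotient.mk sE e, hnvout⟩, ?_⟩
              show Sym2.map (Quotient.mk sV) (G.ends (Quotient.mk sE e).out) = _
              have e1 : (Quotient.mk sV ((σ ^ k) aa) : Quotient sV) = Quotient.mk sV aa :=
                Quotient.sound ((hvrel _ _).mpr ⟨-k, perm_zpow_neg_apply σ k _⟩)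
              have e2 : (Quotient.mk sV ((σ ^ k) bb) : Quotient sV) = Quotient.mk sV bb :=
                Quotient.sound ((hvrel _ _).mpr ⟨-k, perm_zpow_neg_apply σ k _⟩)
              rw [← hk, hends k e, hE0, Sym2.map_pair_eq, Sym2.map_pair_eq, e1, e2]
      exact hstep x y w
    · exact Nonempty.map (Quotient.mk sV) G.connected.nonempty
  -- ==================== arithmetic ====================
  clear_value b a cv ch
  have hgenus : (Fintype.card G.E : ℤ) - (Fintype.card G.V : ℤ) + 1 = (g : ℤ) := hg
  have hVZ : (Fintype.card G.V : ℤ) = (b : ℤ) + (a : ℤ) * p := by exact_mod_cast hVab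
  have hEZ : (Fintype.card G.E : ℤ) = ((cv : ℤ) + (ch : ℤ)) * p := by
    rw [hEq, hQE]; push_cast; ring
  have hconnZ : (b : ℤ) + (a : ℤ) ≤ (ch : ℤ) + 1 := by
    rw [hQVab] at hconn
    exact_mod_cast hconn
  have hpZ : (3 : ℤ) ≤ (p : ℤ) := by exact_mod_cast hp3
  have hgZ : (2 : ℤ) ≤ (g : ℤ) := by exact_mod_cast h2
  have key := arith_final (p : ℤ) (g : ℤ) (b : ℤ) (a : ℤ) (cv : ℤ) (ch : ℤ)
    (Fintype.card G.E : ℤ) (Fintype.card G.V : ℤ) hpZ hgZ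
    (Int.natCast_nonneg b) (Int.natCast_nonneg a) (Int.natCast_nonneg cv)
    hgenus hVZ hEZ hconnZ
  exact_mod_cast key

/-- If `Γ` acts harmonically on a graph of genus `g ≥ 2` and `p` is a
prime factor of `|Γ|`, then `p ≤ g + 1`; in particular `p` divides `(g + 1)!`. -/
theorem prime_factor_bound {Γ : Type} [Group Γ] {G : Multigraph}
    (A : GraphAction Γ G) (hA : A.ActsHarmonically) (g : ℕ) (hg : G.genus = (g : ℤ))
    (h2 : 2 ≤ g) (p : ℕ) (hp : p.Prime) (hdvd : p ∣ Nat.card Γ) :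
    p ≤ g + 1 ∧ p ∣ Nat.factorial (g + 1) := by
  have hΓfin : Finite Γ := by
    apply Finite.of_injective (fun γ => (A.actV γ, A.actE γ) :
      Γ → Equiv.Perm G.V × Equiv.Perm G.E)
    have : Function.Injective (A.actV.prod A.actE) := by
      rw [injective_iff_map_eq_one]
      intro γ' h
      have h1 : A.actV γ' = 1 := congrArg Prod.fst h
      have h2 : A.actE γ' = 1 := congrArg Prod.snd h
      apply A.faithful γ'
      · intro x; rw [h1]; rfl
      · intro e; rw [h2]; rfl
    exact this
  haveI := hΓfin
  haveI : Fintype Γ := Fintype.ofFinite Γ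
  haveI : Fact p.Prime := ⟨hp⟩
  have hdvd' : p ∣ Fintype.card Γ := by rwa [← Nat.card_eq_fintype_card]
  have key : p ≤ g + 1 := by
    rcases eq_or_ne p 2 with rfl | hne
    · omega
    · obtain ⟨γ, hγ⟩ := exists_prime_orderOf_dvd_card p hdvd'
      exact main_bound_s14 A hA hp (hp.odd_of_ne_two hne) γ hγ g hg h2
  exact ⟨key, Nat.dvd_factorial hp.pos (by omega)⟩
end

section
/- Let g₁ > 1 be an integer, p a prime, and set g − 1 = p(g₁ − 1). Suppose a cyclic group C of order p acts harmonically on a graph G of genus g. If p > g₁ + 1, then the p-cyclic harmonic cover G → G/C is horizontally unramified, i.e., every vertex stabilizer C_x is trivial (equivalently m_{φ_C}(x) = 1 for every vertex x of G). -/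
open scoped Classical

namespace CyclicProof
open GraphAction

variable {C : Type} [Group C] {G : Multigraph} {p : ℕ}

lemma gen_of_ne_one (hp : p.Prime) (hcard : Nat.card C = p) {γ : C} (hγ : γ ≠ 1) (δ : C) :
    ∃ k : ℤ, γ ^ k = δ := by
  haveI : Finite C := Nat.finite_of_card_ne_zero (by rw [hcard]; exact hp.pos.ne')
  have h1 : orderOf γ ∣ p := hcard ▸ orderOf_dvd_natCard γ
  rcases hp.eq_one_or_self_of_dvd _ h1 with h | h
  · exact absurd (orderOf_eq_one_iff.mp h) hγ
  · have htop : Subgroup.zpowers γ = ⊤ :=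
      Subgroup.eq_top_of_card_eq _ (by rw [Nat.card_zpowers, h, hcard])
    exact Subgroup.mem_zpowers_iff.mp (htop ▸ Subgroup.mem_top δ)

lemma fixV_all (A : GraphAction C G) (hp : p.Prime) (hcard : Nat.card C = p) {γ : C}
    (hγ : γ ≠ 1) {x : G.V} (hx : A.actV γ x = x) (δ : C) : A.actV δ x = x := by
  obtain ⟨k, hk⟩ := gen_of_ne_one hp hcard hγ δ
  have h2 : A.actV δ = A.actV γ ^ k := by rw [← hk, map_zpow]
  rw [h2]
  exact Function.IsFixedPt.perm_zpow hx k

lemma fixE_all (A : GraphAction C G) (hp : p.Prime) (hcard : Nat.card C = p) {γ : C}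
    (hγ : γ ≠ 1) {e : G.E} (he : A.actE γ e = e) (δ : C) : A.actE δ e = e := by
  obtain ⟨k, hk⟩ := gen_of_ne_one hp hcard hγ δ
  have h2 : A.actE δ = A.actE γ ^ k := by rw [← hk, map_zpow]
  rw [h2]
  exact Function.IsFixedPt.perm_zpow he k

lemma ends_eq {e : G.E} {x : G.V} (hx : x ∈ G.ends e) :
    ∃ y : G.V, G.ends e = s(x, y) ∧ x ≠ y := by
  obtain ⟨y, hy⟩ := Sym2.mem_iff_exists.mp hx
  refine ⟨y, hy, fun h => G.loopless e ?_⟩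
  rw [hy, h]
  exact Sym2.mk_isDiag_iff.mpr rfl

lemma endpoint_fixed (A : GraphAction C G) (hp : p.Prime) (hcard : Nat.card C = p)
    (hp2 : p ≠ 2) {e : G.E} (he : ∀ δ : C, A.actE δ e = e) {x : G.V} (hx : x ∈ G.ends e)
    (δ : C) : A.actV δ x = x := by
  obtain ⟨y, hy, hxy⟩ := ends_eq hx
  have hmap : Sym2.map (A.actV δ) s(x, y) = s(x, y) := by
    rw [← hy, ← A.ends_map δ e, he δ]
  rw [Sym2.map_pair_eq] at hmap
  rcases Sym2.eq_iff.mp hmap with ⟨h1, _⟩ | ⟨h1, h2⟩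
  · exact h1
  · exfalso
    by_cases hδ1 : δ = 1
    · rw [hδ1] at h1; simp at h1; exact hxy h1
    · have hsq : δ * δ ≠ 1 := by
        intro hsq
        have h2' : δ ^ 2 = 1 := by rw [pow_two]; exact hsq
        have hd2 : orderOf δ ∣ 2 := orderOf_dvd_of_pow_eq_one h2'
        haveI : Finite C := Nat.finite_of_card_ne_zero (by rw [hcard]; exact hp.pos.ne')
        have hdp : orderOf δ ∣ p := hcard ▸ orderOf_dvd_natCard δ
        have hcop : Nat.Coprime 2 p := (Nat.coprime_primes Nat.prime_two hp).mpr (Ne.symm hp2)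
        have : orderOf δ ∣ 1 := hcop ▸ Nat.dvd_gcd hd2 hdp
        exact hδ1 (orderOf_eq_one_iff.mp (Nat.dvd_one.mp this))
      have hfix : A.actV (δ * δ) x = x := by
        rw [map_mul]; simp only [Equiv.Perm.mul_apply, h1, h2]
      have := fixV_all A hp hcard hsq hfix δ
      rw [h1] at this; exact hxy this.symm


lemma sym2_rep (z : Sym2 G.V) : ∃ u v : G.V, z = s(u, v) :=
  Sym2.inductionOn z fun u v => ⟨u, v, rfl⟩

lemma card_orbit_free (A : GraphAction C G) (hp : p.Prime) (hcard : Nat.card C = p)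
    {x : G.V} {e : G.E} (hxfix : ∀ δ : C, A.actV δ x = x) (hxe : x ∈ G.ends e)
    (hfree : ∃ δ : C, A.actE δ e ≠ e) :
    Nat.card {d : G.E // x ∈ G.ends d ∧ A.erel ⊤ d e} = p := by
  rw [← hcard]
  refine (Nat.card_congr (Equiv.ofBijective
    (fun δ : C => (⟨A.actE δ e, ?_, δ⁻¹, trivial, ?_⟩ :
      {d : G.E // x ∈ G.ends d ∧ A.erel ⊤ d e})) ⟨?_, ?_⟩)).symm
  · rw [A.ends_map]
    exact Sym2.mem_map.mpr ⟨x, hxe, hxfix δ⟩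
  · rw [map_inv]; exact Equiv.symm_apply_apply _ _
  · intro δ₁ δ₂ h
    have h' : A.actE δ₁ e = A.actE δ₂ e := congrArg Subtype.val h
    by_contra hne
    have hne' : δ₂⁻¹ * δ₁ ≠ 1 := by
      intro h0; rw [inv_mul_eq_one] at h0; exact hne h0.symm
    have hfixe : A.actE (δ₂⁻¹ * δ₁) e = e := by
      rw [map_mul, Equiv.Perm.mul_apply, h', map_inv, show ∀ {α : Type} (f : Equiv.Perm α) (a : α), f⁻¹ (f a) = a from fun f a => f.symm_apply_apply a]
    obtain ⟨δ₀, hδ₀⟩ := hfree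
    exact hδ₀ (fixE_all A hp hcard hne' hfixe δ₀)
  · rintro ⟨d, hxd, δ', -, hδ'⟩
    refine ⟨δ'⁻¹, Subtype.ext ?_⟩
    show A.actE δ'⁻¹ e = d
    rw [← hδ', map_inv, show ∀ {α : Type} (f : Equiv.Perm α) (a : α), f⁻¹ (f a) = a from fun f a => f.symm_apply_apply a]

lemma card_orbit_fixed (A : GraphAction C G) {x : G.V} {e : G.E} (hxe : x ∈ G.ends e)
    (hfix : ∀ δ : C, A.actE δ e = e) :
    Nat.card {d : G.E // x ∈ G.ends d ∧ A.erel ⊤ d e} = 1 := by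
  haveI : Unique {d : G.E // x ∈ G.ends d ∧ A.erel ⊤ d e} := by
    refine ⟨⟨⟨e, hxe, 1, trivial, by simp⟩⟩, ?_⟩
    rintro ⟨d, hxd, δ, -, hδ⟩
    refine Subtype.ext ?_
    show d = e
    have h1 : A.actE δ⁻¹ (A.actE δ d) = A.actE δ⁻¹ e := by rw [hδ]
    rw [map_inv, show ∀ {α : Type} (f : Equiv.Perm α) (a : α), f⁻¹ (f a) = a from fun f a => f.symm_apply_apply a] at h1
    have h2 := hfix δ⁻¹
    rw [map_inv] at h2
    rw [h1, h2]
  exact Nat.card_unique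

lemma not_vertical_of_fixed (A : GraphAction C G) {x : G.V} (hxfix : ∀ δ : C, A.actV δ x = x)
    {e : G.E} (hxe : x ∈ G.ends e) : ¬ A.Vertical ⊤ e := by
  rintro ⟨u, v, huv, δ, -, hδ⟩
  obtain ⟨y, hy, hxy⟩ := ends_eq hxe
  rw [hy] at huv
  rcases Sym2.eq_iff.mp huv.symm with ⟨h1, h2⟩ | ⟨h1, h2⟩
  · -- u = x, v = y
    rw [h1, h2] at hδ
    exact hxy ((hxfix δ) ▸ hδ)
  · -- u = y, v = x
    rw [h1, h2] at hδ
    apply hxy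
    have h3 : A.actV δ⁻¹ (A.actV δ y) = A.actV δ⁻¹ x := by rw [hδ]
    rw [map_inv, show ∀ {α : Type} (f : Equiv.Perm α) (a : α), f⁻¹ (f a) = a from fun f a => f.symm_apply_apply a] at h3
    have h4 := hxfix δ⁻¹
    rw [map_inv] at h4
    exact (h3.trans h4).symm

lemma no_fixed_edge (A : GraphAction C G) (hA : A.ActsHarmonically) (hp : p.Prime)
    (hcard : Nat.card C = p) (hp2 : p ≠ 2) {γ : C} (hγ : γ ≠ 1) (e₀ : G.E) :
    A.actE γ e₀ ≠ e₀ := by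
  intro he₀
  have hall : ∀ δ : C, A.actE δ e₀ = e₀ := fixE_all A hp hcard hγ he₀
  have purity : ∀ x : G.V, (∃ e, x ∈ G.ends e ∧ ∀ δ : C, A.actE δ e = e) →
      ∀ e', x ∈ G.ends e' → ∀ δ : C, A.actE δ e' = e' := by
    rintro x ⟨e, hxe, hefix⟩ e' hxe' δ
    by_contra hne
    have hxfix : ∀ δ : C, A.actV δ x = x := endpoint_fixed A hp hcard hp2 hefix hxe
    have h1 := card_orbit_fixed A hxe hefix
    have h2 := card_orbit_free A hp hcard hxfix hxe' ⟨δ, hne⟩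
    have := (hA ⊤).1 x e e' (not_vertical_of_fixed A hxfix hxe)
      (not_vertical_of_fixed A hxfix hxe')
      ⟨x, hxe, 1, trivial, by simp⟩ ⟨x, hxe', 1, trivial, by simp⟩
    rw [h1, h2] at this
    exact hp.one_lt.ne this
  set T : G.V → Prop := fun x => ∃ e, x ∈ G.ends e ∧ ∀ δ : C, A.actE δ e = e with hT
  have hstep : ∀ x y : G.V,
      (SimpleGraph.fromRel fun a b : G.V => ∃ e : G.E, G.ends e = s(a, b)).Adj x y →
      T x → T y := by
    rintro x y ⟨hne, h | h⟩ hx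
    · obtain ⟨e, he⟩ := h
      have hxe : x ∈ G.ends e := by rw [he]; exact Sym2.mem_mk_left x y
      have hye : y ∈ G.ends e := by rw [he]; exact Sym2.mem_mk_right x y
      exact ⟨e, hye, purity x hx e hxe⟩
    · obtain ⟨e, he⟩ := h
      have hxe : x ∈ G.ends e := by rw [he]; exact Sym2.mem_mk_right y x
      have hye : y ∈ G.ends e := by rw [he]; exact Sym2.mem_mk_left y x
      exact ⟨e, hye, purity x hx e hxe⟩
  have hreach : ∀ x y : G.V, T x → T y := by
    have hwalk : ∀ (x y : G.V)
        (w : (SimpleGraph.fromRel fun a b : G.V => ∃ e : G.E, G.ends e = s(a, b)).Walk x y),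
        T x → T y := by
      intro x y w
      induction w with
      | nil => exact id
      | cons h _ ih => exact fun hx => ih (hstep _ _ h hx)
    intro x y hx
    obtain ⟨w⟩ := G.connected.preconnected x y
    exact hwalk x y w hx
  obtain ⟨u, v, huv⟩ := sym2_rep (G.ends e₀)
  have hTu : T u := ⟨e₀, by rw [huv]; exact Sym2.mem_mk_left u v, hall⟩
  have hTall : ∀ y, T y := fun y => hreach u y hTu
  have hVfix : ∀ y, A.actV γ y = y := by
    intro y
    obtain ⟨e, hye, hef⟩ := hTall y
    exact endpoint_fixed A hp hcard hp2 hef hye γ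
  have hEfix : ∀ f : G.E, A.actE γ f = f := by
    intro f
    obtain ⟨a, b, hab⟩ := sym2_rep (G.ends f)
    have haf : a ∈ G.ends f := by rw [hab]; exact Sym2.mem_mk_left a b
    exact purity a (hTall a) f haf γ
  exact hγ (A.faithful γ hVfix hEfix)


lemma card_E (A : GraphAction C G) (hp : p.Prime) (hcard : Nat.card C = p)
    (hnofix : ∀ γ : C, γ ≠ 1 → ∀ e : G.E, A.actE γ e ≠ e) :
    Nat.card G.E = p * Nat.card (Quotient (A.eSetoid ⊤)) := by
  haveI : Fintype (Quotient (A.eSetoid ⊤)) := Fintype.ofFinite _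
  have hfib : ∀ y : Quotient (A.eSetoid ⊤),
      Nat.card {e : G.E // Quotient.mk (A.eSetoid ⊤) e = y} = p := by
    intro y
    rw [← hcard]
    refine (Nat.card_congr (Equiv.ofBijective
      (fun δ : C => (⟨A.actE δ y.out, ?_⟩ :
        {e : G.E // Quotient.mk (A.eSetoid ⊤) e = y})) ⟨?_, ?_⟩)).symm
    · have h1 : (A.eSetoid ⊤).r (A.actE δ y.out) y.out :=
        ⟨δ⁻¹, trivial, by rw [map_inv]; exact Equiv.symm_apply_apply _ _⟩
      have := Quotient.sound (s := A.eSetoid ⊤) h1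
      rw [this, Quotient.out_eq]
    · intro δ₁ δ₂ h
      have h' : A.actE δ₁ y.out = A.actE δ₂ y.out := congrArg Subtype.val h
      by_contra hne
      have hne' : δ₂⁻¹ * δ₁ ≠ 1 := by
        intro h0; rw [inv_mul_eq_one] at h0; exact hne h0.symm
      exact hnofix _ hne' y.out (by
        rw [map_mul, Equiv.Perm.mul_apply, h', map_inv, show ∀ {α : Type} (f : Equiv.Perm α) (a : α), f⁻¹ (f a) = a from fun f a => f.symm_apply_apply a])
    · rintro ⟨e, he⟩
      have h1 : (A.eSetoid ⊤).r e y.out :=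
        Quotient.exact (he.trans (Quotient.out_eq y).symm)
      obtain ⟨δ, -, hδ⟩ := h1
      refine ⟨δ⁻¹, Subtype.ext ?_⟩
      show A.actE δ⁻¹ y.out = e
      rw [← hδ, map_inv, show ∀ {α : Type} (f : Equiv.Perm α) (a : α), f⁻¹ (f a) = a from fun f a => f.symm_apply_apply a]
  rw [Nat.card_eq_fintype_card, Nat.card_eq_fintype_card,
    ← Fintype.card_congr (Equiv.sigmaFiberEquiv (Quotient.mk (A.eSetoid ⊤))),
    Fintype.card_sigma]
  have : ∀ y : Quotient (A.eSetoid ⊤),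
      Fintype.card {e : G.E // Quotient.mk (A.eSetoid ⊤) e = y} = p := by
    intro y; rw [← Nat.card_eq_fintype_card]; exact hfib y
  rw [Finset.sum_congr rfl fun y _ => this y, Finset.sum_const, smul_eq_mul, mul_comm,
    Finset.card_univ]

lemma card_V (A : GraphAction C G) (hp : p.Prime) (hcard : Nat.card C = p) :
    Nat.card G.V + (p - 1) * Nat.card {x : G.V // ∀ δ : C, A.actV δ x = x}
      = p * Nat.card (Quotient (A.vSetoid ⊤)) := by
  haveI : Fintype (Quotient (A.vSetoid ⊤)) := Fintype.ofFinite _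
  set Fix : G.V → Prop := fun x => ∀ δ : C, A.actV δ x = x with hFix
  -- fiber cardinality
  have hfib : ∀ y : Quotient (A.vSetoid ⊤),
      Nat.card {x : G.V // Quotient.mk (A.vSetoid ⊤) x = y} = if Fix y.out then 1 else p := by
    intro y
    by_cases hf : Fix y.out
    · rw [if_pos hf]
      haveI : Unique {x : G.V // Quotient.mk (A.vSetoid ⊤) x = y} := by
        refine ⟨⟨⟨y.out, Quotient.out_eq y⟩⟩, ?_⟩
        rintro ⟨x, hx⟩
        refine Subtype.ext ?_
        show x = y.out
        have h1 : (A.vSetoid ⊤).r x y.out :=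
          Quotient.exact (hx.trans (Quotient.out_eq y).symm)
        obtain ⟨δ, -, hδ⟩ := h1
        have h2 : A.actV δ⁻¹ (A.actV δ x) = A.actV δ⁻¹ y.out := by rw [hδ]
        rw [map_inv, show ∀ {α : Type} (f : Equiv.Perm α) (a : α), f⁻¹ (f a) = a from fun f a => f.symm_apply_apply a] at h2
        have h3 := hf δ⁻¹
        rw [map_inv] at h3
        rw [h2, h3]
      exact Nat.card_unique
    · rw [if_neg hf]
      rw [← hcard]
      refine (Nat.card_congr (Equiv.ofBijective
        (fun δ : C => (⟨A.actV δ y.out, ?_⟩ :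
          {x : G.V // Quotient.mk (A.vSetoid ⊤) x = y})) ⟨?_, ?_⟩)).symm
      · have h1 : (A.vSetoid ⊤).r (A.actV δ y.out) y.out :=
          ⟨δ⁻¹, trivial, by rw [map_inv]; exact Equiv.symm_apply_apply _ _⟩
        have := Quotient.sound (s := A.vSetoid ⊤) h1
        rw [this, Quotient.out_eq]
      · intro δ₁ δ₂ h
        have h' : A.actV δ₁ y.out = A.actV δ₂ y.out := congrArg Subtype.val h
        by_contra hne
        have hne' : δ₂⁻¹ * δ₁ ≠ 1 := by
          intro h0; rw [inv_mul_eq_one] at h0; exact hne h0.symm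
        have hfx : A.actV (δ₂⁻¹ * δ₁) y.out = y.out := by
          rw [map_mul, Equiv.Perm.mul_apply, h', map_inv, show ∀ {α : Type} (f : Equiv.Perm α) (a : α), f⁻¹ (f a) = a from fun f a => f.symm_apply_apply a]
        exact hf (fixV_all A hp hcard hne' hfx)
      · rintro ⟨x, hx⟩
        have h1 : (A.vSetoid ⊤).r x y.out :=
          Quotient.exact (hx.trans (Quotient.out_eq y).symm)
        obtain ⟨δ, -, hδ⟩ := h1
        refine ⟨δ⁻¹, Subtype.ext ?_⟩
        show A.actV δ⁻¹ y.out = x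
        rw [← hδ, map_inv, show ∀ {α : Type} (f : Equiv.Perm α) (a : α), f⁻¹ (f a) = a from fun f a => f.symm_apply_apply a]
  -- fixed points in bijection with fixed orbits
  have hfixcard : Nat.card {x : G.V // Fix x}
      = Nat.card {y : Quotient (A.vSetoid ⊤) // Fix y.out} := by
    refine Nat.card_congr (Equiv.ofBijective
      (fun x => ⟨Quotient.mk (A.vSetoid ⊤) x.1, ?_⟩) ⟨?_, ?_⟩)
    · -- Fix (out ⟦x⟧): show out ⟦x⟧ = x
      have h1 : (A.vSetoid ⊤).r (Quotient.mk (A.vSetoid ⊤) x.1).out x.1 := Quotient.mk_out x.1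
      obtain ⟨δ, -, hδ⟩ := h1
      have h2 : A.actV δ⁻¹ (A.actV δ ((Quotient.mk (A.vSetoid ⊤) x.1).out))
          = A.actV δ⁻¹ x.1 := by rw [hδ]
      rw [map_inv, show ∀ {α : Type} (f : Equiv.Perm α) (a : α), f⁻¹ (f a) = a from fun f a => f.symm_apply_apply a] at h2
      have h3 := x.2 δ⁻¹
      rw [map_inv] at h3
      rw [h2, h3]
      exact x.2
    · rintro ⟨x₁, hx₁⟩ ⟨x₂, hx₂⟩ h
      have h' : Quotient.mk (A.vSetoid ⊤) x₁ = Quotient.mk (A.vSetoid ⊤) x₂ :=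
        congrArg Subtype.val h
      have h1 : (A.vSetoid ⊤).r x₁ x₂ := Quotient.exact h'
      obtain ⟨δ, -, hδ⟩ := h1
      exact Subtype.ext (((hx₁ δ).symm).trans hδ)
    · rintro ⟨y, hy⟩
      refine ⟨⟨y.out, hy⟩, Subtype.ext ?_⟩
      exact Quotient.out_eq y
  -- sum up
  haveI : ∀ y : Quotient (A.vSetoid ⊤), Fintype {x : G.V // Quotient.mk (A.vSetoid ⊤) x = y} :=
    fun y => Fintype.ofFinite _
  have hsumV : Nat.card G.V = ∑ y : Quotient (A.vSetoid ⊤), (if Fix y.out then 1 else p) := by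
    rw [Nat.card_eq_fintype_card,
      ← Fintype.card_congr (Equiv.sigmaFiberEquiv (Quotient.mk (A.vSetoid ⊤))),
      Fintype.card_sigma]
    exact Finset.sum_congr rfl fun y _ => by
      rw [← Nat.card_eq_fintype_card]; exact hfib y
  have hsumF : Nat.card {x : G.V // Fix x}
      = ∑ y : Quotient (A.vSetoid ⊤), (if Fix y.out then 1 else 0) := by
    rw [hfixcard, Nat.card_eq_fintype_card, Fintype.card_subtype, Finset.card_filter]
  rw [hsumV, hsumF, Nat.card_eq_fintype_card, Finset.mul_sum, ← Finset.sum_add_distrib]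
  have hrhs : p * Fintype.card (Quotient (A.vSetoid ⊤))
      = ∑ _y : Quotient (A.vSetoid ⊤), p := by
    rw [Finset.sum_const, Finset.card_univ, smul_eq_mul, mul_comm]
  rw [hrhs]
  have hp1 := hp.pos
  refine Finset.sum_congr rfl fun y _ => ?_
  by_cases hf : Fix y.out
  · rw [if_pos hf, if_pos hf]; omega
  · rw [if_neg hf, if_neg hf]; omega


lemma conn_bound {Q : Type} [Fintype Q] (H : SimpleGraph Q) (hH : H.Connected) :
    Fintype.card Q ≤ Nat.card H.edgeSet + 1 := by
  obtain ⟨r⟩ := hH.nonempty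
  have key : ∀ v : Q, v ≠ r → ∃ u, H.Adj v u ∧ H.dist u r + 1 = H.dist v r := by
    intro v hv
    obtain ⟨w, hw⟩ := hH.exists_walk_length_eq_dist v r
    cases w with
    | nil => exact absurd rfl hv
    | @cons _ u _ h q =>
      refine ⟨u, h, ?_⟩
      have h1 : H.dist u r ≤ q.length := SimpleGraph.dist_le q
      have h2 : q.length + 1 = H.dist v r := by simpa using hw
      have h3 : H.dist v u ≤ 1 := by
        simpa using SimpleGraph.dist_le (SimpleGraph.Walk.cons h SimpleGraph.Walk.nil)
      have h4 := hH.dist_triangle (u := v) (v := u) (w := r)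
      omega
  choose u hadj hdist using key
  have hinj : Function.Injective
      (fun v : {v : Q // v ≠ r} => (⟨s(v.1, u v.1 v.2), hadj v.1 v.2⟩ : H.edgeSet)) := by
    rintro ⟨v₁, h₁⟩ ⟨v₂, h₂⟩ h
    have h' : s(v₁, u v₁ h₁) = s(v₂, u v₂ h₂) := congrArg Subtype.val h
    rcases Sym2.eq_iff.mp h' with ⟨ha, hb⟩ | ⟨ha, hb⟩
    · exact Subtype.ext ha
    · exfalso
      have d1 := hdist v₁ h₁
      have d2 := hdist v₂ h₂
      have hd1 : H.dist v₂ r + 1 = H.dist v₁ r := by rw [← hb]; exact d1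
      have hd2 : H.dist v₁ r + 1 = H.dist v₂ r := by rw [ha]; exact d2
      omega
  have := Nat.card_le_card_of_injective _ hinj
  rw [Nat.card_eq_fintype_card (α := {v : Q // v ≠ r})] at this
  have h5 : Nat.card {x // x ∈ H.edgeSet} = Nat.card H.edgeSet := rfl
  rw [h5] at this
  have hcc : Fintype.card {v : Q // v ≠ r} = Fintype.card Q - 1 := by
    rw [Fintype.card_subtype_compl, Fintype.card_subtype_eq]
  have hpos : 0 < Fintype.card Q := Fintype.card_pos_iff.mpr ⟨r⟩
  omega

lemma quot_bound (A : GraphAction C G) :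
    Nat.card (Quotient (A.vSetoid ⊤)) ≤ Nat.card (Quotient (A.eSetoid ⊤)) + 1 := by
  haveI : Fintype (Quotient (A.vSetoid ⊤)) := Fintype.ofFinite _
  set mkV : G.V → Quotient (A.vSetoid ⊤) := Quotient.mk (A.vSetoid ⊤) with hmkV
  set H : SimpleGraph (Quotient (A.vSetoid ⊤)) := SimpleGraph.fromRel
    (fun Y₁ Y₂ => ∃ e : G.E, (G.ends e).map mkV = s(Y₁, Y₂)) with hH
  -- mk is constant on orbits
  have hmkact : ∀ (δ : C) (x : G.V), mkV (A.actV δ x) = mkV x := by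
    intro δ x
    exact Quotient.sound (s := A.vSetoid ⊤)
      ⟨δ⁻¹, trivial, by rw [map_inv]; exact Equiv.symm_apply_apply _ _⟩
  -- connectivity of H
  have hconn : H.Connected := by
    rw [SimpleGraph.connected_iff]
    constructor
    · intro Y₁ Y₂
      obtain ⟨x₁, hx₁⟩ := Quotient.exists_rep Y₁
      obtain ⟨x₂, hx₂⟩ := Quotient.exists_rep Y₂
      subst hx₁; subst hx₂
      have hwalk : ∀ (x y : G.V)
          (w : (SimpleGraph.fromRel fun a b : G.V => ∃ e : G.E, G.ends e = s(a, b)).Walk x y),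
          H.Reachable (mkV x) (mkV y) := by
        intro x y w
        induction w with
        | nil => exact SimpleGraph.Reachable.refl _
        | @cons a b _ h _ ih =>
          refine SimpleGraph.Reachable.trans ?_ ih
          by_cases heq : mkV a = mkV b
          · rw [heq]
          · refine SimpleGraph.Adj.reachable ?_
            rw [hH]
            refine ⟨heq, Or.inl ?_⟩
            obtain ⟨-, h | h⟩ := h
            · obtain ⟨e, he⟩ := h
              exact ⟨e, by rw [he, Sym2.map_pair_eq]⟩
            · obtain ⟨e, he⟩ := h
              exact ⟨e, by rw [he, Sym2.map_pair_eq, Sym2.eq_swap]⟩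
      obtain ⟨w⟩ := G.connected.preconnected x₁ x₂
      exact hwalk x₁ x₂ w
    · obtain ⟨x0⟩ := G.connected.nonempty
      exact ⟨mkV x0⟩
  -- injection from H.edgeSet to edge orbits
  have hexists : ∀ z : H.edgeSet, ∃ e : G.E, (G.ends e).map mkV = z.1 := by
    rintro ⟨z, hz⟩
    induction z with
    | _ Y₁ Y₂ =>
      rw [SimpleGraph.mem_edgeSet] at hz
      obtain ⟨-, h | h⟩ := hz
      · exact h
      · obtain ⟨e, he⟩ := h
        exact ⟨e, by rw [he, Sym2.eq_swap]⟩
  choose ed hed using hexists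
  have hinj : Function.Injective (fun z : H.edgeSet => Quotient.mk (A.eSetoid ⊤) (ed z)) := by
    intro z₁ z₂ h
    have h1 : (A.eSetoid ⊤).r (ed z₁) (ed z₂) := Quotient.exact h
    obtain ⟨δ, -, hδ⟩ := h1
    have h2 : (G.ends (ed z₂)).map mkV = (G.ends (ed z₁)).map mkV := by
      rw [← hδ, A.ends_map, Sym2.map_map]
      exact Sym2.map_congr fun x _ => hmkact δ x
    have h3 : z₂.1 = z₁.1 := (hed z₂).symm.trans (h2.trans (hed z₁))
    exact Subtype.ext h3.symm
  have hle : Nat.card H.edgeSet ≤ Nat.card (Quotient (A.eSetoid ⊤)) :=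
    Nat.card_le_card_of_injective _ hinj
  have hcb := conn_bound H hconn
  rw [Nat.card_eq_fintype_card]
  omega


end CyclicProof

/-- Let `g₁ > 1`, `p` prime, and `g − 1 = p(g₁ − 1)`. If a cyclic group
`C` of order `p` acts harmonically on a graph `G` of genus `g` and `p > g₁ + 1`, then the
`p`-cyclic cover `G → G/C` is horizontally unramified: every vertex stabilizer is
trivial. -/
theorem cyclic_cover_unramified {C : Type} [Group C] [IsCyclic C] {G : Multigraph}
    (A : GraphAction C G) (hA : A.ActsHarmonically) (g₁ p : ℕ) (hg₁ : 1 < g₁)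
    (hp : p.Prime) (hcard : Nat.card C = p)
    (hg : G.genus = ((p * (g₁ - 1) + 1 : ℕ) : ℤ)) (hbig : g₁ + 1 < p) :
    ∀ (x : G.V) (γ : C), A.actV γ x = x → γ = 1 := by
  intro x γ hfixx
  by_contra hγ
  have hp2 : p ≠ 2 := by omega
  have hp5 : 3 < p := by omega
  have hnofix : ∀ γ' : C, γ' ≠ 1 → ∀ e : G.E, A.actE γ' e ≠ e :=
    fun γ' h e => CyclicProof.no_fixed_edge A hA hp hcard hp2 h e
  have hE := CyclicProof.card_E A hp hcard hnofix
  have hV := CyclicProof.card_V A hp hcard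
  have hQ := CyclicProof.quot_bound A
  haveI : Nonempty {x : G.V // ∀ δ : C, A.actV δ x = x} :=
    ⟨⟨x, CyclicProof.fixV_all A hp hcard hγ hfixx⟩⟩
  have hf1 : 1 ≤ Nat.card {x : G.V // ∀ δ : C, A.actV δ x = x} := Nat.card_pos
  -- pass to integers
  set f := Nat.card {x : G.V // ∀ δ : C, A.actV δ x = x} with hfdef
  set q := Nat.card (Quotient (A.vSetoid ⊤)) with hqdef
  set qE := Nat.card (Quotient (A.eSetoid ⊤)) with hqEdef
  simp only [Multigraph.genus] at hg
  rw [← Nat.card_eq_fintype_card (α := G.E), ← Nat.card_eq_fintype_card (α := G.V)] at hg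
  have hgz : (Nat.card G.E : ℤ) - (Nat.card G.V : ℤ) + 1 = (p : ℤ) * ((g₁ : ℤ) - 1) + 1 := by
    rw [hg]; push_cast [Nat.cast_sub hg₁.le]; ring
  have hEz : (Nat.card G.E : ℤ) = (p : ℤ) * (qE : ℤ) := by exact_mod_cast congrArg Nat.cast hE
  have hVz : (Nat.card G.V : ℤ) + ((p : ℤ) - 1) * (f : ℤ) = (p : ℤ) * (q : ℤ) := by
    have := congrArg (Nat.cast : ℕ → ℤ) hV
    push_cast [Nat.cast_sub hp.one_le] at this
    linarith
  have hQz : (q : ℤ) ≤ (qE : ℤ) + 1 := by exact_mod_cast hQ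
  have hfz : (1 : ℤ) ≤ (f : ℤ) := by exact_mod_cast hf1
  have hpz : (g₁ : ℤ) + 2 ≤ (p : ℤ) := by exact_mod_cast hbig
  have hg1z : (2 : ℤ) ≤ (g₁ : ℤ) := by exact_mod_cast hg₁
  -- key equation
  have heq : ((p : ℤ) - 1) * (f : ℤ) = (p : ℤ) * ((q : ℤ) + (g₁ : ℤ) - 1 - (qE : ℤ)) := by
    have h1 : (p : ℤ) * (qE : ℤ) - ((p : ℤ) * (q : ℤ) - ((p : ℤ) - 1) * (f : ℤ)) + 1
        = (p : ℤ) * ((g₁ : ℤ) - 1) + 1 := by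
      rw [← hEz, ← hVz]; linarith [hgz]
    ring_nf
    ring_nf at h1
    linarith
  have hdvd : (p : ℤ) ∣ ((p : ℤ) - 1) * (f : ℤ) :=
    ⟨(q : ℤ) + (g₁ : ℤ) - 1 - (qE : ℤ), heq⟩
  have hprime : Prime (p : ℤ) := Nat.prime_iff_prime_int.mp hp
  have hpf : (p : ℤ) ∣ (f : ℤ) := by
    rcases hprime.2.2 _ _ hdvd with h | h
    · exfalso
      have h1 : (p : ℤ) ∣ 1 := by
        have h2 := dvd_sub (dvd_refl (p : ℤ)) h
        simpa using h2
      have := Int.le_of_dvd one_pos h1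
      omega
    · exact h
  have hfp : (p : ℤ) ≤ (f : ℤ) := Int.le_of_dvd (by linarith) hpf
  -- final contradiction
  have h8 : ((p : ℤ) - 1) * (p : ℤ) ≤ ((p : ℤ) - 1) * (f : ℤ) := by
    apply mul_le_mul_of_nonneg_left hfp
    omega
  have h9 : (q : ℤ) + (g₁ : ℤ) - 1 - (qE : ℤ) ≤ (g₁ : ℤ) := by linarith
  have h10 : (p : ℤ) * ((q : ℤ) + (g₁ : ℤ) - 1 - (qE : ℤ)) ≤ (p : ℤ) * (g₁ : ℤ) := by
    apply mul_le_mul_of_nonneg_left h9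
    omega
  have h11 : (p : ℤ) * (g₁ : ℤ) ≤ (p : ℤ) * ((p : ℤ) - 2) := by
    apply mul_le_mul_of_nonneg_left (by omega)
    omega
  nlinarith [h8, heq, h10, h11]
end

section
/- Suppose a group Γ acts harmonically on a graph G of genus g > 2, and C ≤ Γ is a normal cyclic subgroup of prime order p with p < g. Suppose further that the quotient map G → G/C is horizontally unramified and that g(G/C) ≤ 1. Then |Γ| ≤ 4(g − 1). -/
open scoped Classical

section AuxLemmas

variable {Γ : Type} [Group Γ] {G : Multigraph}

lemma Multigraph.exists_ends_eq (G : Multigraph) (e : G.E) :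
    ∃ a b : G.V, G.ends e = s(a, b) := by
  obtain ⟨b, hb⟩ := Sym2.mem_iff_exists.mp (Sym2.out_fst_mem (G.ends e))
  exact ⟨_, b, hb⟩

lemma Multigraph.ne_of_ends_eq (G : Multigraph) {e : G.E} {a b : G.V}
    (h : G.ends e = s(a, b)) : a ≠ b := by
  intro hab
  exact G.loopless e (by rw [h, hab]; exact Sym2.mk_isDiag_iff.mpr rfl)


lemma GraphAction.actV_inv_apply (A : GraphAction Γ G) (γ : Γ) (x : G.V) :
    A.actV γ⁻¹ (A.actV γ x) = x := by
  rw [map_inv]; exact Equiv.symm_apply_apply _ _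

lemma GraphAction.actV_apply_inv (A : GraphAction Γ G) (γ : Γ) (x : G.V) :
    A.actV γ (A.actV γ⁻¹ x) = x := by
  rw [map_inv]; exact Equiv.apply_symm_apply _ _

lemma GraphAction.actE_inv_apply (A : GraphAction Γ G) (γ : Γ) (e : G.E) :
    A.actE γ⁻¹ (A.actE γ e) = e := by
  rw [map_inv]; exact Equiv.symm_apply_apply _ _

lemma GraphAction.actE_apply_inv (A : GraphAction Γ G) (γ : Γ) (e : G.E) :
    A.actE γ (A.actE γ⁻¹ e) = e := by
  rw [map_inv]; exact Equiv.apply_symm_apply _ _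

lemma GraphAction.actV_inv_fix (A : GraphAction Γ G) {γ : Γ} {x : G.V}
    (hx : A.actV γ x = x) : A.actV γ⁻¹ x = x := by
  conv_lhs => rw [← hx]
  exact A.actV_inv_apply γ x

lemma GraphAction.actE_inv_fix (A : GraphAction Γ G) {γ : Γ} {e : G.E}
    (he : A.actE γ e = e) : A.actE γ⁻¹ e = e := by
  conv_lhs => rw [← he]
  exact A.actE_inv_apply γ e

lemma GraphAction.actV_fix_zpow (A : GraphAction Γ G) {γ : Γ} {x : G.V}
    (hx : A.actV γ x = x) {δ : Γ} (hδ : δ ∈ Subgroup.zpowers γ) : A.actV δ x = x := by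
  obtain ⟨k, rfl⟩ := Subgroup.mem_zpowers_iff.mp hδ
  rw [map_zpow]
  exact Function.IsFixedPt.perm_zpow hx k

lemma GraphAction.actE_fix_zpow (A : GraphAction Γ G) {γ : Γ} {e : G.E}
    (he : A.actE γ e = e) {δ : Γ} (hδ : δ ∈ Subgroup.zpowers γ) : A.actE δ e = e := by
  obtain ⟨k, rfl⟩ := Subgroup.mem_zpowers_iff.mp hδ
  rw [map_zpow]
  exact Function.IsFixedPt.perm_zpow he k

lemma GraphAction.vrel_zpowers_left (A : GraphAction Γ G) {γ : Γ} {x v : G.V}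
    (hx : A.actV γ x = x) (h : A.vrel (Subgroup.zpowers γ) x v) : v = x := by
  obtain ⟨δ, hδ, hd⟩ := h
  rw [A.actV_fix_zpow hx hδ] at hd
  exact hd.symm

lemma GraphAction.vrel_zpowers_right (A : GraphAction Γ G) {γ : Γ} {x v : G.V}
    (hx : A.actV γ x = x) (h : A.vrel (Subgroup.zpowers γ) v x) : v = x := by
  obtain ⟨δ, hδ, hd⟩ := h
  have h2 : A.actV δ⁻¹ x = x := A.actV_inv_fix (A.actV_fix_zpow hx hδ)
  calc v = A.actV δ⁻¹ (A.actV δ v) := (A.actV_inv_apply δ v).symm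
  _ = A.actV δ⁻¹ x := by rw [hd]
  _ = x := h2

/-- No edge incident to a `γ`-fixed vertex is `⟨γ⟩`-vertical. -/
lemma GraphAction.not_vertical_star (A : GraphAction Γ G) {γ : Γ} {x : G.V}
    (hx : A.actV γ x = x) {f : G.E} (hxf : x ∈ G.ends f) :
    ¬ A.Vertical (Subgroup.zpowers γ) f := by
  rintro ⟨a, b, hab, hr⟩
  obtain ⟨z, hz⟩ := Sym2.mem_iff_exists.mp hxf
  have hxz : x ≠ z := G.ne_of_ends_eq hz
  rw [hz] at hab
  rcases Sym2.eq_iff.mp hab with ⟨rfl, rfl⟩ | ⟨rfl, rfl⟩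
  · exact hxz (A.vrel_zpowers_left hx hr).symm
  · exact hxz (A.vrel_zpowers_right hx hr).symm

/-- If `γ` fixes a vertex `x` and some edge at `x`, it fixes every edge at `x`. -/
lemma GraphAction.fix_all_star (A : GraphAction Γ G) (hA : A.ActsHarmonically)
    {γ : Γ} {x : G.V} (hx : A.actV γ x = x) {e : G.E} (hxe : x ∈ G.ends e)
    (he : A.actE γ e = e) : ∀ f : G.E, x ∈ G.ends f → A.actE γ f = f := by
  intro f hxf
  set Δ := Subgroup.zpowers γ with hΔ
  have hxx : A.vrel Δ x x := ⟨1, Subgroup.one_mem _, by simp⟩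
  have hcard := (hA Δ).1 x e f (A.not_vertical_star hx hxe)
    (A.not_vertical_star hx hxf) ⟨x, hxe, hxx⟩ ⟨x, hxf, hxx⟩
  have h1 : Nat.card {h : G.E // x ∈ G.ends h ∧ A.erel Δ h e} = 1 := by
    rw [Nat.card_eq_one_iff_unique]
    constructor
    · constructor
      rintro ⟨h₁, hmem₁, δ₁, hδ₁, hd₁⟩ ⟨h₂, hmem₂, δ₂, hδ₂, hd₂⟩
      have k : ∀ (h' : G.E) (δ : Γ), δ ∈ Δ → A.actE δ h' = e → h' = e := by
        intro h' δ hδ hd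
        have h2 : A.actE δ⁻¹ e = e := A.actE_inv_fix (A.actE_fix_zpow he hδ)
        calc h' = A.actE δ⁻¹ (A.actE δ h') := (A.actE_inv_apply δ h').symm
        _ = A.actE δ⁻¹ e := by rw [hd]
        _ = e := h2
      exact Subtype.ext ((k h₁ δ₁ hδ₁ hd₁).trans (k h₂ δ₂ hδ₂ hd₂).symm)
    · exact ⟨⟨e, hxe, 1, Subgroup.one_mem _, by simp⟩⟩
  rw [h1] at hcard
  obtain ⟨hsub, -⟩ := Nat.card_eq_one_iff_unique.mp hcard.symm
  have hinvx : A.actV γ⁻¹ x = x := A.actV_inv_fix hx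
  have hmem2 : x ∈ G.ends (A.actE γ⁻¹ f) := by
    rw [A.ends_map]
    exact Sym2.mem_map.mpr ⟨x, hxf, hinvx⟩
  have hγinv : A.actE γ (A.actE γ⁻¹ f) = f := A.actE_apply_inv γ f
  have heq : (⟨A.actE γ⁻¹ f, hmem2, γ, Subgroup.mem_zpowers γ, hγinv⟩ :
      {h : G.E // x ∈ G.ends h ∧ A.erel Δ h f}) =
      ⟨f, hxf, 1, Subgroup.one_mem _, by simp⟩ := hsub.elim _ _
  have hval := congrArg Subtype.val heq
  simp only at hval
  calc A.actE γ f = A.actE γ (A.actE γ⁻¹ f) := by rw [hval]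
  _ = f := hγinv

/-- If `γ` fixes an edge `e` and one endpoint of `e`, it fixes both endpoints. -/
lemma GraphAction.fix_ends (A : GraphAction Γ G) {γ : Γ} {e : G.E} {x : G.V}
    (hx : A.actV γ x = x) (hxe : x ∈ G.ends e) (he : A.actE γ e = e) :
    ∀ v ∈ G.ends e, A.actV γ v = v := by
  obtain ⟨z, hz⟩ := Sym2.mem_iff_exists.mp hxe
  have hkey : G.ends e = Sym2.map (A.actV γ) (G.ends e) := by
    rw [← A.ends_map, he]
  rw [hz] at hkey
  rw [Sym2.map_pair_eq, hx] at hkey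
  rcases Sym2.eq_iff.mp hkey with ⟨-, h⟩ | ⟨h1, h2⟩
  · intro v hv
    rw [hz] at hv
    rcases Sym2.mem_iff.mp hv with rfl | rfl
    · exact hx
    · exact h.symm
  · exact absurd h2.symm (G.ne_of_ends_eq hz)

/-- Star rigidity: an automorphism in a harmonic action fixing a vertex and an
incident edge is the identity. -/
lemma GraphAction.star_rigid (A : GraphAction Γ G) (hA : A.ActsHarmonically)
    {γ : Γ} {x : G.V} {e : G.E} (hx : A.actV γ x = x) (hxe : x ∈ G.ends e)
    (he : A.actE γ e = e) : γ = 1 := by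
  classical
  set P : G.V → Prop := fun v => A.actV γ v = v ∧ ∃ f, v ∈ G.ends f ∧ A.actE γ f = f
    with hP
  have hPx : P x := ⟨hx, e, hxe, he⟩
  have step : ∀ v w, P v →
      (SimpleGraph.fromRel fun a b : G.V => ∃ e : G.E, G.ends e = s(a, b)).Adj v w →
      P w := by
    rintro v w ⟨hv, f₀, hvf₀, hf₀⟩ hadj
    rw [SimpleGraph.fromRel_adj] at hadj
    have hE' : ∃ e', G.ends e' = s(v, w) := by
      rcases hadj.2 with ⟨e', h⟩ | ⟨e', h⟩
      · exact ⟨e', h⟩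
      · exact ⟨e', by rw [h, Sym2.eq_swap]⟩
    obtain ⟨e', hE⟩ := hE'
    have hvmem : v ∈ G.ends e' := by rw [hE]; exact Sym2.mem_mk_left _ _
    have hwmem : w ∈ G.ends e' := by rw [hE]; exact Sym2.mem_mk_right _ _
    have hfix := A.fix_all_star hA hv hvf₀ hf₀ e' hvmem
    have hw := A.fix_ends hv hvmem hfix w hwmem
    exact ⟨hw, e', hwmem, hfix⟩
  have walkstep : ∀ (v u : G.V)
      (w : (SimpleGraph.fromRel fun a b : G.V => ∃ e : G.E, G.ends e = s(a, b)).Walk v u),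
      P v → P u := by
    intro v u w
    induction w with
    | nil => exact id
    | cons h q ih => exact fun hv => ih (step _ _ hv h)
  have hall : ∀ v, P v := by
    intro v
    obtain ⟨w⟩ := G.connected.preconnected x v
    exact walkstep x v w hPx
  refine A.faithful γ (fun v => (hall v).1) ?_
  intro f
  obtain ⟨a, b, hab⟩ := G.exists_ends_eq f
  have hamem : a ∈ G.ends f := by rw [hab]; exact Sym2.mem_mk_left _ _
  obtain ⟨ha, f₀, h1, h2⟩ := hall a
  exact A.fix_all_star hA ha h1 h2 f hamem

end AuxLemmas
section AuxLemmas2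

variable {Γ : Type} [Group Γ] {G : Multigraph}

/-- If all fibers of the quotient map have cardinality `p`, the total cardinality
is `p` times the number of classes. -/
lemma card_quot_fibers {α : Type} [Fintype α] (s : Setoid α) {p : ℕ}
    (h : ∀ q : Quotient s, Nat.card {x : α // Quotient.mk s x = q} = p) :
    Fintype.card α = p * Nat.card (Quotient s) := by
  classical
  letI : Fintype (Quotient s) := Fintype.ofFinite _
  have e1 : Fintype.card α = ∑ q : Quotient s, Fintype.card {x // Quotient.mk s x = q} := by
    rw [← Fintype.card_sigma]
    exact Fintype.card_congr (Equiv.sigmaFiberEquiv (Quotient.mk s)).symm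
  have e2 : ∀ q : Quotient s, Fintype.card {x // Quotient.mk s x = q} = p := by
    intro q; rw [← Nat.card_eq_fintype_card]; exact h q
  rw [e1, Finset.sum_congr rfl (fun q _ => e2 q), Finset.sum_const, Finset.card_univ,
    smul_eq_mul, Nat.card_eq_fintype_card, mul_comm]

lemma GraphAction.card_V_eq (A : GraphAction Γ G) (C : Subgroup Γ)
    (hunram : A.HorizUnramified C) :
    Fintype.card G.V = Nat.card C * Nat.card (A.quotV C) := by
  apply card_quot_fibers
  intro q
  have hmem : ∀ σ : C, Quotient.mk (A.vSetoid C) (A.actV σ (Quotient.out q)) = q := by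
    intro σ
    have h1 : Quotient.mk (A.vSetoid C) (A.actV σ (Quotient.out q)) =
        Quotient.mk (A.vSetoid C) (Quotient.out q) :=
      Quotient.sound ⟨(σ : Γ)⁻¹, C.inv_mem σ.2, A.actV_inv_apply σ _⟩
    rw [h1, Quotient.out_eq]
  refine (Nat.card_eq_of_bijective (fun σ : C => ⟨A.actV σ (Quotient.out q), hmem σ⟩)
    ⟨?_, ?_⟩).symm
  · intro σ τ h
    have hval := congrArg Subtype.val h
    simp only at hval
    have hfix : A.actV ((τ : Γ)⁻¹ * σ) (Quotient.out q) = Quotient.out q := by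
      rw [map_mul, Equiv.Perm.mul_apply, hval, A.actV_inv_apply]
    have := hunram _ _ (C.mul_mem (C.inv_mem τ.2) σ.2) hfix
    have : (τ : Γ)⁻¹ * (σ : Γ) = 1 := this
    exact (Subtype.ext (inv_mul_eq_one.mp this)).symm
  · rintro ⟨x, hx⟩
    have hrel : (A.vSetoid C).r x (Quotient.out q) :=
      Quotient.exact (by rw [hx, Quotient.out_eq])
    obtain ⟨δ, hδ, hd⟩ := hrel
    refine ⟨⟨δ⁻¹, C.inv_mem hδ⟩, Subtype.ext ?_⟩
    simp only
    rw [← hd, A.actV_inv_apply]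

lemma GraphAction.vertical_act (A : GraphAction Γ G) {C : Subgroup Γ} (hnorm : C.Normal)
    (γ : Γ) {e : G.E} (h : A.Vertical C e) : A.Vertical C (A.actE γ e) := by
  obtain ⟨a, b, hab, δ, hδ, hd⟩ := h
  refine ⟨A.actV γ a, A.actV γ b, by rw [A.ends_map, hab, Sym2.map_pair_eq],
    γ * δ * γ⁻¹, hnorm.conj_mem δ hδ γ, ?_⟩
  rw [map_mul, map_mul, Equiv.Perm.mul_apply, Equiv.Perm.mul_apply, A.actV_inv_apply, hd]

lemma GraphAction.not_vertical_act (A : GraphAction Γ G) {C : Subgroup Γ}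
    (hnorm : C.Normal) (γ : Γ) {e : G.E} (h : ¬ A.Vertical C e) :
    ¬ A.Vertical C (A.actE γ e) := by
  intro hv
  refine h ?_
  have := A.vertical_act hnorm γ⁻¹ hv
  rwa [A.actE_inv_apply] at this

lemma GraphAction.nonvert_stab (A : GraphAction Γ G) {C : Subgroup Γ}
    (hunram : A.HorizUnramified C) {e : G.E} (he : ¬ A.Vertical C e) {δ : Γ}
    (hδ : δ ∈ C) (hfix : A.actE δ e = e) : δ = 1 := by
  obtain ⟨a, b, hab⟩ := G.exists_ends_eq e
  have hkey : s(a, b) = s(A.actV δ a, A.actV δ b) := by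
    rw [← Sym2.map_pair_eq, ← hab, ← A.ends_map, hfix, hab]
  rcases Sym2.eq_iff.mp hkey with ⟨h1, -⟩ | ⟨h1, h2⟩
  · exact hunram a δ hδ h1.symm
  · exact absurd ⟨a, b, hab, δ, hδ, h2.symm⟩ he

lemma GraphAction.card_nonvert_eq (A : GraphAction Γ G) {C : Subgroup Γ}
    (hnorm : C.Normal) (hunram : A.HorizUnramified C) :
    Fintype.card {e : G.E // ¬ A.Vertical C e} = Nat.card C * Nat.card (A.quotE C) := by
  apply card_quot_fibers
  intro q
  have hmem : ∀ σ : C, Quotient.mk ((A.eSetoid C).comap Subtype.val)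
      (⟨A.actE σ (Quotient.out q).val, A.not_vertical_act hnorm σ (Quotient.out q).2⟩ :
        {e : G.E // ¬ A.Vertical C e}) = q := by
    intro σ
    have h1 : Quotient.mk ((A.eSetoid C).comap Subtype.val)
        (⟨A.actE σ (Quotient.out q).val, A.not_vertical_act hnorm σ (Quotient.out q).2⟩ :
          {e : G.E // ¬ A.Vertical C e}) =
        Quotient.mk ((A.eSetoid C).comap Subtype.val) (Quotient.out q) :=
      Quotient.sound ⟨(σ : Γ)⁻¹, C.inv_mem σ.2, A.actE_inv_apply σ _⟩
    rw [h1, Quotient.out_eq]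
  refine (Nat.card_eq_of_bijective
    (fun σ : C => ⟨⟨A.actE σ (Quotient.out q).val,
      A.not_vertical_act hnorm σ (Quotient.out q).2⟩, hmem σ⟩) ⟨?_, ?_⟩).symm
  · intro σ τ h
    have hval : A.actE σ (Quotient.out q).val = A.actE τ (Quotient.out q).val := by
      have := congrArg (fun z => (Subtype.val (Subtype.val z) : G.E)) h
      simpa using this
    have hfix : A.actE ((τ : Γ)⁻¹ * σ) (Quotient.out q).val = (Quotient.out q).val := by
      rw [map_mul, Equiv.Perm.mul_apply, hval, A.actE_inv_apply]
    have h1 : (τ : Γ)⁻¹ * (σ : Γ) = 1 :=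
      A.nonvert_stab hunram (Quotient.out q).2 (C.mul_mem (C.inv_mem τ.2) σ.2) hfix
    exact (Subtype.ext (inv_mul_eq_one.mp h1)).symm
  · rintro ⟨⟨f, hf⟩, hq⟩
    have hrel : ((A.eSetoid C).comap Subtype.val).r ⟨f, hf⟩ (Quotient.out q) :=
      Quotient.exact (by rw [hq, Quotient.out_eq])
    obtain ⟨δ, hδ, hd⟩ := hrel
    refine ⟨⟨δ⁻¹, C.inv_mem hδ⟩, Subtype.ext (Subtype.ext ?_)⟩
    simp only
    rw [← hd, A.actE_inv_apply]

/-- A connected simple graph on a finite vertex type has at least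
`card V - 1` edges. -/
lemma conn_card_bound {V : Type} [Fintype V] (Q : SimpleGraph V) (hQ : Q.Connected) :
    Fintype.card V ≤ Nat.card Q.edgeSet + 1 := by
  classical
  obtain ⟨r⟩ := hQ.nonempty
  have key : ∀ v : V, v ≠ r → ∃ s : Q.edgeSet, ∃ v' : V,
      (s : Sym2 V) = s(v, v') ∧ Q.dist v' r + 1 = Q.dist v r := by
    intro v hv
    obtain ⟨p, hp⟩ := hQ.exists_walk_length_eq_dist v r
    have hnil : ¬ p.Nil := SimpleGraph.Walk.not_nil_of_ne hv
    refine ⟨⟨s(v, p.getVert 1), Q.mem_edgeSet.mpr (p.adj_snd hnil)⟩,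
      p.getVert 1, rfl, ?_⟩
    have h1 : Q.dist (p.getVert 1) r + 1 ≤ p.length := by
      have ht : Q.dist (p.getVert 1) r ≤ p.tail.length := SimpleGraph.dist_le p.tail
      have hl := SimpleGraph.Walk.length_tail_add_one hnil
      omega
    have h2 : Q.dist v r ≤ Q.dist (p.getVert 1) r + 1 := by
      obtain ⟨p', hp'⟩ := hQ.exists_walk_length_eq_dist (p.getVert 1) r
      have := SimpleGraph.dist_le (SimpleGraph.Walk.cons (p.adj_snd hnil) p')
      rw [SimpleGraph.Walk.length_cons, hp'] at this
      exact this
    omega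
  choose f v' hs hd using key
  have hFinj : Function.Injective (fun v : {v : V // v ≠ r} => f v.1 v.2) := by
    rintro ⟨a, ha⟩ ⟨b, hb⟩ h
    simp only at h
    have h1 : (s(a, v' a ha) : Sym2 V) = s(b, v' b hb) := by
      rw [← hs a ha, ← hs b hb, h]
    rcases Sym2.eq_iff.mp h1 with ⟨h2, -⟩ | ⟨h2, h3⟩
    · exact Subtype.ext h2
    · exfalso
      have d1 := hd a ha
      have d2 := hd b hb
      rw [h3] at d1
      rw [← h2] at d2
      omega
  have hle := Nat.card_le_card_of_injective _ hFinj
  have hcard : Nat.card {v : V // v ≠ r} = Fintype.card V - 1 := by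
    rw [Nat.card_eq_fintype_card]
    have := Fintype.card_subtype_compl (fun v : V => v = r)
    simp only [Fintype.card_subtype_eq] at this
    exact this
  have hpos : 0 < Fintype.card V := Fintype.card_pos_iff.mpr ⟨r⟩
  omega

end AuxLemmas2
section AuxLemmas3

variable {Γ : Type} [Group Γ] {G : Multigraph}

lemma GraphAction.quot_card_bound (A : GraphAction Γ G) (C : Subgroup Γ) :
    Nat.card (A.quotV C) ≤ Nat.card (A.quotE C) + 1 := by
  classical
  letI : Fintype (A.quotV C) := Fintype.ofFinite _
  set F : G.E → Sym2 (A.quotV C) :=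
    fun e => (G.ends e).map (Quotient.mk (A.vSetoid C)) with hF
  set Q : SimpleGraph (A.quotV C) :=
    { Adj := fun a b => a ≠ b ∧ ∃ e, ¬ A.Vertical C e ∧ F e = s(a, b)
      symm := ⟨by rintro a b ⟨hab, e, h1, h2⟩; exact ⟨hab.symm, e, h1, by rw [h2, Sym2.eq_swap]⟩⟩
      loopless := ⟨fun a h => h.1 rfl⟩ } with hQ
  have hFact : ∀ (δ : Γ), δ ∈ C → ∀ e, F (A.actE δ e) = F e := by
    intro δ hδ e
    simp only [hF]
    rw [A.ends_map, Sym2.map_map]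
    exact Sym2.map_congr fun v _ =>
      Quotient.sound ⟨δ⁻¹, C.inv_mem hδ, A.actV_inv_apply δ v⟩
  have hconn : Q.Connected := by
    rw [SimpleGraph.connected_iff]
    refine ⟨?_, ?_⟩
    · have hstep : ∀ {u v : G.V},
          (SimpleGraph.fromRel fun a b : G.V => ∃ e : G.E, G.ends e = s(a, b)).Adj u v →
          Q.Reachable (Quotient.mk (A.vSetoid C) u) (Quotient.mk (A.vSetoid C) v) := by
        intro u v hadj
        rw [SimpleGraph.fromRel_adj] at hadj
        have hE : ∃ e, G.ends e = s(u, v) := by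
          rcases hadj.2 with ⟨e, h⟩ | ⟨e, h⟩
          · exact ⟨e, h⟩
          · exact ⟨e, by rw [h, Sym2.eq_swap]⟩
        obtain ⟨e, he⟩ := hE
        by_cases hv : A.Vertical C e
        · obtain ⟨a', b', hab, hr⟩ := hv
          rw [he] at hab
          have heq : Quotient.mk (A.vSetoid C) u = Quotient.mk (A.vSetoid C) v := by
            rcases Sym2.eq_iff.mp hab with ⟨rfl, rfl⟩ | ⟨rfl, rfl⟩
            · exact Quotient.sound hr
            · exact (Quotient.sound hr).symm
          rw [heq]
        · refine SimpleGraph.Adj.reachable ?_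
          refine ⟨fun hq => hv ⟨u, v, he, Quotient.exact hq⟩, e, hv, ?_⟩
          simp only [hF]
          rw [he, Sym2.map_pair_eq]
      have hwalk : ∀ (u v : G.V)
          (_ : (SimpleGraph.fromRel fun a b : G.V => ∃ e : G.E, G.ends e = s(a, b)).Walk u v),
          Q.Reachable (Quotient.mk (A.vSetoid C) u) (Quotient.mk (A.vSetoid C) v) := by
        intro u v w
        induction w with
        | nil => exact SimpleGraph.Reachable.refl _
        | cons h q ih => exact SimpleGraph.Reachable.trans (hstep h) ih
      intro a b
      refine Quotient.inductionOn₂ a b ?_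
      intro x y
      obtain ⟨w⟩ := G.connected.preconnected x y
      exact hwalk x y w
    · obtain ⟨x⟩ := G.connected.nonempty
      exact ⟨Quotient.mk _ x⟩
  have h1 := conn_card_bound Q hconn
  have key : ∀ s : Q.edgeSet, ∃ e : G.E, ¬ A.Vertical C e ∧ F e = (s : Sym2 _) := by
    rintro ⟨s, hs⟩
    induction s with
    | _ a b =>
      obtain ⟨-, e, he1, he2⟩ := Q.mem_edgeSet.mp hs
      exact ⟨e, he1, he2⟩
  choose ge hg1 hg2 using key
  have hinj : Function.Injective
      (fun s : Q.edgeSet =>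
        (Quotient.mk ((A.eSetoid C).comap Subtype.val) ⟨ge s, hg1 s⟩ : A.quotE C)) := by
    intro s₁ s₂ h
    obtain ⟨δ, hδ, hd⟩ := Quotient.exact h
    have hd' : A.actE δ (ge s₁) = ge s₂ := hd
    have hFeq : F (ge s₁) = F (ge s₂) := by rw [← hd', hFact δ hδ]
    apply Subtype.ext
    rw [← hg2 s₁, ← hg2 s₂, hFeq]
  have h2 := Nat.card_le_card_of_injective _ hinj
  have h3 : Nat.card (A.quotE C) =
      Nat.card (Quotient (Setoid.comap Subtype.val (A.eSetoid C))) := rfl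
  rw [Nat.card_eq_fintype_card, h3]
  omega

end AuxLemmas3
/-- Suppose `Γ` acts harmonically on `G` of genus `g > 2`, and `C ≤ Γ`
is a normal cyclic subgroup of prime order `p < g` such that `G → G/C` is horizontally
unramified and `g(G/C) ≤ 1`. Then `|Γ| ≤ 4(g − 1)`. -/
theorem low_genus_quotient_bound {Γ : Type} [Group Γ] {G : Multigraph}
    (A : GraphAction Γ G) (hA : A.ActsHarmonically) (g : ℕ) (hg : G.genus = (g : ℤ))
    (h2 : 2 < g) (C : Subgroup Γ) (hnorm : C.Normal) (hcyc : IsCyclic C)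
    (p : ℕ) (hp : p.Prime) (hC : Nat.card C = p) (hpg : p < g)
    (hunram : A.HorizUnramified C) (hqg : A.quotGenus C ≤ 1) :
    Nat.card Γ ≤ 4 * (g - 1) := by
  classical
  -- Counting: free action on vertices and on non-vertical edges.
  have hV : Fintype.card G.V = p * Nat.card (A.quotV C) := by
    have h := A.card_V_eq C hunram; rwa [hC] at h
  have hEh : Fintype.card {e : G.E // ¬ A.Vertical C e} = p * Nat.card (A.quotE C) := by
    have h := A.card_nonvert_eq hnorm hunram; rwa [hC] at h
  have hsplit : Fintype.card {e : G.E // A.Vertical C e} +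
      Fintype.card {e : G.E // ¬ A.Vertical C e} = Fintype.card G.E := by
    have h1 := Fintype.card_subtype_compl (fun e : G.E => A.Vertical C e)
    have h2 := Fintype.card_subtype_le (fun e : G.E => A.Vertical C e)
    omega
  -- The quotient graph has genus 0 or 1.
  have hqg' : (Nat.card (A.quotE C) : ℤ) - (Nat.card (A.quotV C) : ℤ) + 1 ≤ 1 := hqg
  have hb1 : Nat.card (A.quotV C) ≤ Nat.card (A.quotE C) + 1 := A.quot_card_bound C
  have hb2 : Nat.card (A.quotE C) ≤ Nat.card (A.quotV C) := by omega
  have hve1 : Fintype.card {e : G.E // ¬ A.Vertical C e} ≤ Fintype.card G.V := by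
    rw [hV, hEh]
    exact Nat.mul_le_mul_left p hb2
  have hve2 : Fintype.card G.V ≤ Fintype.card {e : G.E // ¬ A.Vertical C e} + p := by
    rw [hV, hEh]
    calc p * Nat.card (A.quotV C) ≤ p * (Nat.card (A.quotE C) + 1) :=
          Nat.mul_le_mul_left p hb1
    _ = p * Nat.card (A.quotE C) + p := by ring
  have hgeq : (Fintype.card G.E : ℤ) - (Fintype.card G.V : ℤ) + 1 = (g : ℤ) := by
    rw [← hg]; rfl
  have hp2 : 2 ≤ p := hp.two_le
  -- There exists a vertical edge.
  have hevpos : 0 < Fintype.card {e : G.E // A.Vertical C e} := by omega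
  obtain ⟨⟨e, he⟩⟩ := Fintype.card_pos_iff.mp hevpos
  -- Orbit–stabilizer on the vertical edge `e`.
  letI : MulAction Γ G.E := MulAction.compHom G.E A.actE
  obtain ⟨a0, b0, hab⟩ := G.exists_ends_eq e
  have ha0 : a0 ∈ G.ends e := by rw [hab]; exact Sym2.mem_mk_left _ _
  have hstab : Nat.card (MulAction.stabilizer Γ e) ≤ 2 := by
    have hinj : Function.Injective (fun σ : MulAction.stabilizer Γ e =>
        (if A.actV (σ : Γ) a0 = a0 then (0 : Fin 2) else 1)) := by
      intro σ τ hst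
      have hσe : A.actE (σ : Γ) e = e := σ.2
      have hτe : A.actE (τ : Γ) e = e := τ.2
      have hmm : ∀ (γ : Γ), A.actE γ e = e → A.actV γ a0 ∈ G.ends e := by
        intro γ hγ
        have hE : G.ends e = Sym2.map (A.actV γ) (G.ends e) := by
          rw [← A.ends_map, hγ]
        rw [hE]
        exact Sym2.mem_map.mpr ⟨a0, ha0, rfl⟩
      have key : ∀ (γ : Γ), A.actE γ e = e → ¬ A.actV γ a0 = a0 → A.actV γ a0 = b0 := by
        intro γ hγ hne
        have := hmm γ hγ
        rw [hab] at this
        rcases Sym2.mem_iff.mp this with h | h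
        · exact absurd h hne
        · exact h
      by_cases hc1 : A.actV (σ : Γ) a0 = a0 <;> by_cases hc2 : A.actV (τ : Γ) a0 = a0
      · have hδ : A.actV ((τ : Γ)⁻¹ * σ) a0 = a0 := by
          rw [map_mul, Equiv.Perm.mul_apply, hc1, A.actV_inv_fix hc2]
        have hδe : A.actE ((τ : Γ)⁻¹ * σ) e = e := by
          rw [map_mul, Equiv.Perm.mul_apply, hσe, A.actE_inv_fix hτe]
        have h1 := A.star_rigid hA hδ ha0 hδe
        exact (Subtype.ext (inv_mul_eq_one.mp h1)).symm
      · simp only [if_pos hc1, if_neg hc2] at hst; exact absurd hst (by decide)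
      · simp only [if_neg hc1, if_pos hc2] at hst; exact absurd hst (by decide)
      · have hσb := key _ hσe hc1
        have hτb := key _ hτe hc2
        have hδ : A.actV ((τ : Γ)⁻¹ * σ) a0 = a0 := by
          rw [map_mul, Equiv.Perm.mul_apply, hσb, ← hτb, A.actV_inv_apply]
        have hδe : A.actE ((τ : Γ)⁻¹ * σ) e = e := by
          rw [map_mul, Equiv.Perm.mul_apply, hσe, A.actE_inv_fix hτe]
        have h1 := A.star_rigid hA hδ ha0 hδe
        exact (Subtype.ext (inv_mul_eq_one.mp h1)).symm
    have h1 := Nat.card_le_card_of_injective _ hinj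
    simpa using h1
  have horbit : Nat.card (MulAction.orbit Γ e) ≤
      Nat.card {e : G.E // A.Vertical C e} := by
    have hvert : ∀ f : MulAction.orbit Γ e, A.Vertical C f.val := by
      rintro ⟨f, γ, rfl⟩
      exact A.vertical_act hnorm γ he
    have hinj : Function.Injective (fun f : MulAction.orbit Γ e =>
        (⟨f.val, hvert f⟩ : {e : G.E // A.Vertical C e})) := by
      intro x y h
      have h' := h
      simp only [Subtype.mk.injEq] at h'
      exact Subtype.ext h'
    exact Nat.card_le_card_of_injective _ hinj
  have horb_eq : Nat.card Γ =
      Nat.card (MulAction.orbit Γ e) * Nat.card (MulAction.stabilizer Γ e) := by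
    rw [Subgroup.card_eq_card_quotient_mul_card_subgroup (MulAction.stabilizer Γ e)]
    congr 1
    exact Nat.card_congr (MulAction.orbitEquivQuotientStabilizer Γ e).symm
  have hΓ : Nat.card Γ ≤ Nat.card {e : G.E // A.Vertical C e} * 2 := by
    rw [horb_eq]
    exact Nat.mul_le_mul horbit hstab
  have hevN : Nat.card {e : G.E // A.Vertical C e} =
      Fintype.card {e : G.E // A.Vertical C e} := Nat.card_eq_fintype_card
  omega
end
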